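/- arXiv:2406.06317 — 2 statements merged into one kernel-verified Lean document; each statement's English description precedes it below -/
import Mathlib

section
/- Let G' be a connected graph and x, v vertices of G' with N_{G'}[x] ⊆ N_{G'}[v]. Let T be a search tree on G' − x. Then the search trees T(0,x,v), T(1,x,v), …, T(d_{T,v},x,v) lie on a path in the rotation graph R(G'); that is, consecutive trees T(i,x,v) and T(i+1,x,v) differ by a single rotation. -/
open scoped Classical

universe u

variable {V : Type u}

/-- A rooted tree structure on a support set: data only, well-formedness is `RTree.WF`. -/
structure RTree (V : Type u) where
  supp : Set V
  root : V
  parent : V → Option V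

namespace RTree

def parentRel (T : RTree V) (a b : V) : Prop := T.parent a = some b

/-- `u` is an ancestor of `v` in `T` (reflexively). -/
def isAncestor (T : RTree V) (u v : V) : Prop :=
  Relation.ReflTransGen T.parentRel v u

def WF (T : RTree V) : Prop :=
  T.root ∈ T.supp ∧
  T.parent T.root = none ∧
  (∀ v, v ∉ T.supp → T.parent v = none) ∧
  (∀ v ∈ T.supp, v ≠ T.root → ∃ u ∈ T.supp, T.parent v = some u) ∧
  (∀ v ∈ T.supp, T.isAncestor T.root v)

/-- The vertex set of the subtree `T|c` rooted at `c`. -/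
def descendants (T : RTree V) (c : V) : Set V :=
  {v | v ∈ T.supp ∧ T.isAncestor c v}

/-- Iterated parent. -/
def pIter (T : RTree V) : ℕ → V → Option V
  | 0, w => some w
  | n + 1, w => (T.parent w).bind (T.pIter n)

/-- The depth `d_{T,v}` of `v` in `T` (distance to the root). -/
noncomputable def depthOf (T : RTree V) (v : V) : ℕ :=
  sInf {n | T.pIter n v = some T.root}

/-- The subtree of `T` rooted at `c`. -/
noncomputable def subtreeAt (T : RTree V) (c : V) : RTree V where
  supp := T.descendants c
  root := c
  parent := fun w => if w = c then none else if w ∈ T.descendants c then T.parent w else none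

/-- The vertex at depth `i` on the path from the root to `v`. -/
noncomputable def ancAt (T : RTree V) (v : V) (i : ℕ) : V :=
  (T.pIter (T.depthOf v - i) v).getD T.root

/-- Insertion `T(i,x,v)` of a new vertex `x` at depth `i` along the root-to-`v` path:
`i = 0` makes `x` the new root, `i = d_{T,v}+1` adds `x` as a new child of `v`, and
for `1 ≤ i ≤ d_{T,v}` the `i`-th edge of the root-to-`v` path is subdivided by `x`. -/
noncomputable def insertAt (T : RTree V) (i : ℕ) (x v : V) : RTree V :=
  if i = 0 then
    { supp := insert x T.supp
      root := x
      parent := fun w => if w = x then none else if w = T.root then some x else T.parent w }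
  else if i = T.depthOf v + 1 then
    { supp := insert x T.supp
      root := T.root
      parent := fun w => if w = x then some v else T.parent w }
  else
    { supp := insert x T.supp
      root := T.root
      parent := fun w =>
        if w = x then some (T.ancAt v (i - 1))
        else if w = T.ancAt v i then some x
        else T.parent w }

/-- Elimination `p(T,x)` of a vertex `x` (meaningful when `x` has at most one child). -/
noncomputable def elim (T : RTree V) (x : V) : RTree V where
  supp := T.supp \ {x}
  root :=
    if T.root = x then (if h : ∃ w, T.parent w = some x then h.choose else T.root) else T.root
  parent := fun w =>
    if w = x then none
    else if T.parent w = some x then T.parent x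
    else T.parent w

end RTree

/-- Reachability inside the vertex set `s`, i.e. in the induced subgraph `G[s]`. -/
def reachWithin (G : SimpleGraph V) (s : Set V) : V → V → Prop :=
  Relation.ReflTransGen (fun a b => a ∈ s ∧ b ∈ s ∧ G.Adj a b)

/-- Recursive definition of a search tree: the children of the root are the roots of
search trees on the connected components of the graph minus the root. -/
inductive IsSearchTreeRec {V : Type u} (G : SimpleGraph V) : RTree V → Prop
  | intro (T : RTree V) (hwf : T.WF)
      (hconn : ∀ a ∈ T.supp, ∀ b ∈ T.supp, reachWithin G T.supp a b)
      (hcomp : ∀ c, T.parent c = some T.root →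
        ∀ w, w ∈ T.descendants c ↔
          (w ∈ T.supp ∧ w ≠ T.root ∧ reachWithin G (T.supp \ {T.root}) c w))
      (hrec : ∀ c, T.parent c = some T.root → IsSearchTreeRec G (T.subtreeAt c)) :
      IsSearchTreeRec G T

/-- `T` is a search tree on the induced subgraph `G[s]`. -/
def IsSearchTreeOn (G : SimpleGraph V) (s : Set V) (T : RTree V) : Prop :=
  T.supp = s ∧ IsSearchTreeRec G T

/-- `T` is a search tree on `G`. -/
def IsSearchTree (G : SimpleGraph V) (T : RTree V) : Prop :=
  IsSearchTreeOn G Set.univ T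

/-- The `uv`-rotation of `T` (for `v` a child of `u`): `u` becomes a child of `v`, `v` takes
`u`'s old parent, and each subtree `S` of `v` is reattached below `u` iff `u` has a
`G`-neighbour in `S`. -/
noncomputable def rotate (G : SimpleGraph V) (T : RTree V) (u v : V) : RTree V where
  supp := T.supp
  root := if T.root = u then v else T.root
  parent := fun w =>
    if w = v then T.parent u
    else if w = u then some v
    else if T.parent w = some v then
      (if ∃ z ∈ T.descendants w, G.Adj u z then some u else some v)
    else T.parent w

def IsRotation (G : SimpleGraph V) (S S' : RTree V) : Prop :=
  ∃ u v, S.parent v = some u ∧ S' = rotate G S u v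

def rotAdj (G : SimpleGraph V) (S S' : RTree V) : Prop :=
  S ≠ S' ∧ (IsRotation G S S' ∨ IsRotation G S' S)

/-- The rotation graph of the induced subgraph `G[s]`: vertices are the search trees on
`G[s]`, two trees being adjacent iff they differ by a single rotation. -/
def rotationGraphOn (G : SimpleGraph V) (s : Set V) :
    SimpleGraph {T : RTree V // IsSearchTreeOn G s T} where
  Adj T T' := rotAdj G T.1 T'.1
  symm := ⟨fun T T' h => ⟨Ne.symm h.1, Or.symm h.2⟩⟩
  loopless := ⟨fun T h => h.1 rfl⟩

/-- A vertex of `K` of maximal depth in `T` (the vertex `v_{λ(T)}`). -/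
noncomputable def deepestIn (T : RTree V) (K : Set V) : V :=
  if h : ∃ u, u ∈ K ∧ ∀ w ∈ K, T.depthOf w ≤ T.depthOf u then h.choose else T.root

/-- `u` and `v` have different relative order in `T` and `T'`. -/
def diffRelOrder (T T' : RTree V) (u v : V) : Prop :=
  (T.isAncestor u v ∧ ¬ T'.isAncestor u v) ∨ (¬ T.isAncestor u v ∧ T'.isAncestor u v)

/-- The step from `S` to `S'` is a rotation of the pair `u`, `v`. -/
def isUVStep (G : SimpleGraph V) (u v : V) (S S' : RTree V) : Prop :=
  (S.parent v = some u ∧ S' = rotate G S u v) ∨ (S.parent u = some v ∧ S' = rotate G S v u)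

/-- A threshold graph: obtainable from the one-vertex graph by repeatedly adding either an
isolated vertex or a universal vertex. -/
def IsThresholdGraph {V : Type u} [Fintype V] (G : SimpleGraph V) : Prop :=
  ∃ e : Fin (Fintype.card V) ≃ V,
    ∀ i : Fin (Fintype.card V),
      (∀ j, j < i → ¬ G.Adj (e i) (e j)) ∨ (∀ j, j < i → G.Adj (e i) (e j))

/-- The complete split graph `SPK_{p,q}`: a clique of size `p` completely joined to an
independent set of size `q`. -/
def completeSplitGraph (p q : ℕ) : SimpleGraph (Fin p ⊕ Fin q) where
  Adj a b := a ≠ b ∧ (a.isLeft = true ∨ b.isLeft = true)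
  symm := ⟨fun a b h => ⟨Ne.symm h.1, Or.symm h.2⟩⟩
  loopless := ⟨fun a h => h.1 rfl⟩

namespace RTree

variable {V : Type u} {G : SimpleGraph V} {T : RTree V}

lemma pIter_add (T : RTree V) (m n : ℕ) (w : V) :
    T.pIter (m + n) w = (T.pIter m w).bind (T.pIter n) := by
  induction m generalizing w with
  | zero => simp [pIter]
  | succ m ih =>
    have : m + 1 + n = (m + n) + 1 := by omega
    rw [this]
    show (T.parent w).bind (T.pIter (m + n)) = _
    cases h : T.parent w with
    | none => simp [pIter, h]
    | some p => simp [pIter, h, ih]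

lemma pIter_one (T : RTree V) (w : V) : T.pIter 1 w = T.parent w := by
  cases h : T.parent w <;> simp [pIter, h]

lemma isAncestor_iff_pIter {u w : V} :
    T.isAncestor u w ↔ ∃ n, T.pIter n w = some u := by
  constructor
  · intro h
    induction h using Relation.ReflTransGen.head_induction_on with
    | refl => exact ⟨0, rfl⟩
    | head hstep _ ih =>
      obtain ⟨n, hn⟩ := ih
      exact ⟨n + 1, by simp only [pIter, parentRel] at hstep ⊢; rw [hstep]; simpa using hn⟩
  · rintro ⟨n, hn⟩
    induction n generalizing w with
    | zero => simp [pIter] at hn; subst hn; exact Relation.ReflTransGen.refl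
    | succ n ih =>
      simp only [pIter] at hn
      cases h : T.parent w with
      | none => simp [h] at hn
      | some p =>
        rw [h] at hn; simp at hn
        exact Relation.ReflTransGen.head h (ih hn)

section WF
variable (hwf : T.WF)
include hwf

lemma root_mem : T.root ∈ T.supp := hwf.1

lemma parent_root : T.parent T.root = none := hwf.2.1

lemma mem_of_parent {w p : V} (h : T.parent w = some p) : w ∈ T.supp := by
  by_contra hw
  rw [hwf.2.2.1 w hw] at h; exact absurd h (by simp)

lemma ne_root_of_parent {w p : V} (h : T.parent w = some p) : w ≠ T.root := by
  rintro rfl; rw [hwf.2.1] at h; exact absurd h (by simp)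

lemma parent_mem {w p : V} (h : T.parent w = some p) : p ∈ T.supp := by
  obtain ⟨q, hq, hq2⟩ := hwf.2.2.2.1 w (mem_of_parent hwf h) (ne_root_of_parent hwf h)
  rw [h] at hq2; cases hq2; exact hq

lemma pIter_mem {w z : V} {n : ℕ} (hw : w ∈ T.supp) (h : T.pIter n w = some z) :
    z ∈ T.supp := by
  induction n generalizing w with
  | zero => simp [pIter] at h; subst h; exact hw
  | succ n ih =>
    simp only [pIter] at h
    cases hp : T.parent w with
    | none => simp [hp] at h
    | some p => rw [hp] at h; simp at h; exact ih (parent_mem hwf hp) h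

lemma pIter_root_none {n : ℕ} (hn : 1 ≤ n) : T.pIter n T.root = none := by
  obtain ⟨m, rfl⟩ : ∃ m, n = m + 1 := ⟨n - 1, by omega⟩
  have : T.pIter (m + 1) T.root = T.pIter (1 + m) T.root := by ring_nf
  rw [this, pIter_add, pIter_one, hwf.2.1]; rfl

/-- The set of `n` with `pIter n w = some root` is a subsingleton. -/
lemma depth_unique {w : V} {m n : ℕ} (hm : T.pIter m w = some T.root)
    (hn : T.pIter n w = some T.root) : m = n := by
  by_contra hne
  wlog hlt : m < n generalizing m n
  · exact this hn hm (Ne.symm hne) (by omega)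
  have : T.pIter n w = (T.pIter m w).bind (T.pIter (n - m)) := by
    rw [← pIter_add]; congr 1; omega
  rw [hm] at this; simp at this
  rw [pIter_root_none hwf (by omega)] at this
  rw [this] at hn; exact absurd hn (by simp)

lemma pIter_depth {w : V} (hw : w ∈ T.supp) :
    T.pIter (T.depthOf w) w = some T.root := by
  have h := hwf.2.2.2.2 w hw
  rw [isAncestor_iff_pIter] at h
  exact Nat.sInf_mem h

lemma depth_eq {w : V} {n : ℕ} (h : T.pIter n w = some T.root) : T.depthOf w = n :=
  depth_unique hwf (pIter_depth hwf (by
    by_contra hw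
    cases n with
    | zero => simp [pIter] at h; rw [h] at hw; exact hw hwf.1
    | succ n => simp only [pIter, hwf.2.2.1 w hw] at h; exact absurd h (by simp))) h

lemma depth_root : T.depthOf T.root = 0 := depth_eq hwf rfl

lemma depth_parent {w p : V} (h : T.parent w = some p) :
    T.depthOf w = T.depthOf p + 1 := by
  have hp := parent_mem hwf h
  apply depth_eq hwf
  have : T.pIter (1 + T.depthOf p) w = (T.pIter 1 w).bind (T.pIter (T.depthOf p)) :=
    pIter_add ..
  rw [pIter_one, h] at this
  simp at this
  rw [Nat.add_comm] at this
  rw [this, pIter_depth hwf hp]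

lemma depth_pIter {w z : V} {k : ℕ} (hw : w ∈ T.supp) (h : T.pIter k w = some z) :
    T.depthOf w = k + T.depthOf z := by
  have hz := pIter_mem hwf hw h
  apply depth_eq hwf
  rw [pIter_add, h]; simp [pIter_depth hwf hz]

lemma isAncestor_antisymm {a b : V} (hb : b ∈ T.supp) (h1 : T.isAncestor a b)
    (h2 : T.isAncestor b a) : a = b := by
  rw [isAncestor_iff_pIter] at h1 h2
  obtain ⟨m, hm⟩ := h1
  obtain ⟨n, hn⟩ := h2
  have hab : T.pIter (m + n) b = some b := by rw [pIter_add, hm]; simpa using hn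
  have := depth_pIter hwf hb hab
  have hmn : m = 0 := by omega
  subst hmn; simp [pIter] at hm; exact hm.symm

lemma isAncestor_total {a b w : V} (hw : w ∈ T.supp) (h1 : T.isAncestor a w)
    (h2 : T.isAncestor b w) : T.isAncestor a b ∨ T.isAncestor b a := by
  rw [isAncestor_iff_pIter] at h1 h2
  obtain ⟨m, hm⟩ := h1
  obtain ⟨n, hn⟩ := h2
  rcases Nat.le_total m n with hle | hle
  · right
    rw [isAncestor_iff_pIter]
    refine ⟨n - m, ?_⟩
    have : T.pIter n w = (T.pIter m w).bind (T.pIter (n - m)) := by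
      rw [← pIter_add]; congr 1; omega
    rw [hm] at this; simp at this; rw [← this, hn]
  · left
    rw [isAncestor_iff_pIter]
    refine ⟨m - n, ?_⟩
    have : T.pIter m w = (T.pIter n w).bind (T.pIter (m - n)) := by
      rw [← pIter_add]; congr 1; omega
    rw [hn] at this; simp at this; rw [← this, hm]

lemma depth_le_of_isAncestor {a w : V} (hw : w ∈ T.supp) (h : T.isAncestor a w) :
    T.depthOf a ≤ T.depthOf w := by
  rw [isAncestor_iff_pIter] at h
  obtain ⟨m, hm⟩ := h
  have := depth_pIter hwf hw hm; omega

lemma mem_of_isAncestor {a w : V} (hw : w ∈ T.supp) (h : T.isAncestor a w) :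
    a ∈ T.supp := by
  rw [isAncestor_iff_pIter] at h
  obtain ⟨m, hm⟩ := h
  exact pIter_mem hwf hw hm

end WF

lemma mem_descendants {c w : V} :
    w ∈ T.descendants c ↔ w ∈ T.supp ∧ T.isAncestor c w := Iff.rfl

lemma descendants_subset {u c : V} (h : T.isAncestor c u) :
    T.descendants u ⊆ T.descendants c := fun w hw => ⟨hw.1, hw.2.trans h⟩

lemma self_mem_descendants {c : V} (hc : c ∈ T.supp) : c ∈ T.descendants c :=
  ⟨hc, Relation.ReflTransGen.refl⟩

section WF2
variable (hwf : T.WF)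
include hwf

lemma descendants_root : T.descendants T.root = T.supp := by
  ext w
  exact ⟨fun h => h.1, fun h => ⟨h, hwf.2.2.2.2 w h⟩⟩

omit hwf in
lemma isAncestor_parent {c u : V} (h : T.parent c = some u) : T.isAncestor u c :=
  Relation.ReflTransGen.single h

lemma root_not_mem_descendants {c : V} (h : T.parent c = some T.root) :
    T.root ∉ T.descendants c := by
  rintro ⟨_, hanc⟩
  rcases Relation.ReflTransGen.cases_head hanc with heq | ⟨y, hy, _⟩
  · subst heq; rw [hwf.2.1] at h; exact absurd h (by simp)
  · simp only [parentRel, hwf.2.1] at hy; exact absurd hy (by simp)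

lemma not_self_parent {c u : V} (h : T.parent c = some u) : c ≠ u := by
  rintro rfl
  have := depth_parent hwf h; omega

lemma not_mem_descendants_of_parent {c u : V} (h : T.parent c = some u) :
    u ∉ T.descendants c := by
  rintro ⟨hu, hanc⟩
  have := isAncestor_antisymm hwf (mem_of_parent hwf h) (isAncestor_parent h) hanc
  exact not_self_parent hwf h this.symm

/-- Every strict descendant of `u` lies in the subtree of some child of `u`. -/
lemma exists_child {u w : V} (hw : w ∈ T.supp) (hne : w ≠ u) (h : T.isAncestor u w) :
    ∃ c, T.parent c = some u ∧ w ∈ T.descendants c := by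
  rw [isAncestor_iff_pIter] at h
  obtain ⟨k, hk⟩ := h
  cases k with
  | zero => simp [pIter] at hk; exact absurd hk hne
  | succ k =>
    have : T.pIter (k + 1) w = (T.pIter k w).bind (T.pIter 1) := pIter_add ..
    rw [hk] at this
    cases hc : T.pIter k w with
    | none => rw [hc] at this; exact absurd this.symm (by simp)
    | some c =>
      rw [hc] at this; simp [pIter_one] at this
      refine ⟨c, this.symm, hw, ?_⟩
      rw [isAncestor_iff_pIter]; exact ⟨k, hc⟩

lemma descendants_ssubset {c u : V} (h : T.parent c = some u) :
    T.descendants c ⊂ T.descendants u := by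
  constructor
  · exact descendants_subset (isAncestor_parent h)
  · intro hsub
    exact not_mem_descendants_of_parent hwf h
      (hsub (self_mem_descendants (parent_mem hwf h)))

lemma isAncestor_eq_of_depth {a b : V} (hb : b ∈ T.supp) (h : T.isAncestor a b)
    (hd : T.depthOf a = T.depthOf b) : a = b := by
  rw [isAncestor_iff_pIter] at h
  obtain ⟨m, hm⟩ := h
  have := depth_pIter hwf hb hm
  have hm0 : m = 0 := by omega
  subst hm0; simp [pIter] at hm; exact hm.symm

lemma descendants_disjoint {c c' u : V} (hc : T.parent c = some u)
    (hc' : T.parent c' = some u) (hne : c ≠ c') {w : V}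
    (h : w ∈ T.descendants c) (h' : w ∈ T.descendants c') : False := by
  have hcm := mem_of_parent hwf hc
  have hcm' := mem_of_parent hwf hc'
  have hd : T.depthOf c = T.depthOf c' := by
    rw [depth_parent hwf hc, depth_parent hwf hc']
  rcases isAncestor_total hwf h.1 h.2 h'.2 with htot | htot
  · exact hne (isAncestor_eq_of_depth hwf hcm' htot hd)
  · exact hne (isAncestor_eq_of_depth hwf hcm htot hd.symm).symm

end WF2
end RTree
section Reach
variable {V : Type u} {G : SimpleGraph V}

lemma reachWithin.mono {s t : Set V} (hst : s ⊆ t) {a b : V}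
    (h : reachWithin G s a b) : reachWithin G t a b := by
  induction h with
  | refl => exact Relation.ReflTransGen.refl
  | tail _ hstep ih => exact ih.tail ⟨hst hstep.1, hst hstep.2.1, hstep.2.2⟩

lemma reachWithin.symm {s : Set V} {a b : V} (h : reachWithin G s a b) :
    reachWithin G s b a := by
  induction h with
  | refl => exact Relation.ReflTransGen.refl
  | tail _ hstep ih =>
    exact Relation.ReflTransGen.head ⟨hstep.2.1, hstep.1, hstep.2.2.symm⟩ ih

lemma reachWithin.single {s : Set V} {a b : V} (ha : a ∈ s) (hb : b ∈ s)
    (hadj : G.Adj a b) : reachWithin G s a b :=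
  Relation.ReflTransGen.single ⟨ha, hb, hadj⟩

lemma reachWithin.mem_right {s : Set V} {a b : V} (ha : a ∈ s)
    (h : reachWithin G s a b) : b ∈ s := by
  induction h with
  | refl => exact ha
  | tail _ hstep _ => exact hstep.2.1

/-- A set `d` is closed under `reachWithin s` steps if no edges leave it. -/
lemma reachWithin.closed {s d : Set V} {a b : V}
    (hcl : ∀ z y, z ∈ d → y ∈ s → G.Adj z y → y ∈ d)
    (ha : a ∈ d) (h : reachWithin G s a b) : b ∈ d := by
  induction h with
  | refl => exact ha
  | tail _ hstep ih => exact hcl _ _ ih hstep.2.1 hstep.2.2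

end Reach

namespace RTree
variable {V : Type u} {G : SimpleGraph V} {T : RTree V}

/-- Flat (non-recursive) characterization of search trees. -/
def Flat (G : SimpleGraph V) (T : RTree V) : Prop :=
  T.WF ∧
  (∀ u ∈ T.supp, ∀ a ∈ T.descendants u, ∀ b ∈ T.descendants u,
      reachWithin G (T.descendants u) a b) ∧
  (∀ u ∈ T.supp, ∀ c, T.parent c = some u → ∀ w,
      w ∈ T.descendants c ↔
        w ∈ T.descendants u ∧ w ≠ u ∧ reachWithin G (T.descendants u \ {u}) c w)

/-- Generic chain-transfer lemma. -/
lemma chain_transfer {r r' : V → V → Prop} {u : V}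
    (h : ∀ z y, r z y → Relation.ReflTransGen r y u → z ≠ u → r' z y) :
    ∀ {w}, Relation.ReflTransGen r w u → Relation.ReflTransGen r' w u := by
  intro w hw
  induction hw using Relation.ReflTransGen.head_induction_on with
  | refl => exact Relation.ReflTransGen.refl
  | @head z y hstep hrest ih =>
    by_cases hz : z = u
    · subst hz; exact Relation.ReflTransGen.refl
    · exact Relation.ReflTransGen.head (h z y hstep hrest hz) ih

section Sub
variable (hwf : T.WF)
include hwf

lemma subtree_parent_eq {c w : V} (hw : w ∈ T.descendants c) (hne : w ≠ c) :
    (T.subtreeAt c).parent w = T.parent w := by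
  simp [subtreeAt, hne, hw]

/-- S1: descendants in a subtree agree with descendants in `T`. -/
lemma subtree_descendants {c u : V} (hu : u ∈ T.descendants c) :
    (T.subtreeAt c).descendants u = T.descendants u := by
  have hus : u ∈ T.supp := hu.1
  ext w
  constructor
  · rintro ⟨hw1, hw2⟩
    have hw1' : w ∈ T.supp := by
      have : (T.subtreeAt c).supp = T.descendants c := rfl
      rw [this] at hw1; exact hw1.1
    refine ⟨hw1', ?_⟩
    -- every subtree-step is a T-step
    refine chain_transfer (fun z y hzy _ _ => ?_) hw2
    simp only [parentRel, subtreeAt] at hzy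
    by_cases hz : z = c
    · simp [hz] at hzy
    · by_cases hzd : z ∈ T.descendants c
      · simpa [hz, hzd, parentRel] using hzy
      · simp [hz, hzd] at hzy
  · rintro ⟨hw1, hw2⟩
    have hwd : w ∈ T.descendants c := ⟨hw1, hw2.trans hu.2⟩
    refine ⟨hwd, ?_⟩
    refine chain_transfer (fun z y hzy hrest hzu => ?_) hw2
    -- z is a strict descendant of u inside desc c, z ≠ c unless u = c handled by depth
    have hz : z ∈ T.supp := mem_of_parent hwf hzy
    have hzanc : T.isAncestor u z := Relation.ReflTransGen.head hzy hrest
    have hzc : z ∈ T.descendants c := ⟨hz, hzanc.trans hu.2⟩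
    have hzne : z ≠ c := by
      rintro rfl
      -- then isAncestor u z and isAncestor z u, so z = u, contradiction
      exact hzu (isAncestor_antisymm hwf hz hzanc hu.2).symm
    show parentRel _ z y
    simp only [parentRel]
    rw [subtree_parent_eq hwf hzc hzne]
    exact hzy

lemma subtree_wf {c u : V} (hc : T.parent c = some u) : (T.subtreeAt c).WF := by
  have hcs : c ∈ T.supp := mem_of_parent hwf hc
  have hcd : c ∈ T.descendants c := self_mem_descendants hcs
  refine ⟨hcd, by simp [subtreeAt], fun w hw => by simp [subtreeAt] at hw ⊢; intros; simp_all, ?_, ?_⟩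
  · intro w hw hne
    have hw' : w ∈ T.descendants c := hw
    have hwsupp : w ∈ T.supp := hw'.1
    have hwne : w ≠ c := hne
    obtain ⟨y, hy, hrest⟩ : ∃ y, T.parentRel w y ∧ Relation.ReflTransGen T.parentRel y c := by
      rcases Relation.ReflTransGen.cases_head hw'.2 with heq | h
      · exact absurd heq hwne
      · exact h
    refine ⟨y, ⟨parent_mem hwf hy, hrest⟩, ?_⟩
    rw [subtree_parent_eq hwf hw' hwne]; exact hy
  · intro w hw
    have hw' : w ∈ T.descendants c := hw
    show (T.subtreeAt c).isAncestor c w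
    have : (T.subtreeAt c).descendants c = T.descendants c := subtree_descendants hwf hcd
    have hmem : w ∈ (T.subtreeAt c).descendants c := by rw [this]; exact hw'
    exact hmem.2

lemma subtree_children {c u w : V} (hu : u ∈ T.descendants c) :
    (T.subtreeAt c).parent w = some u ↔ T.parent w = some u := by
  constructor
  · intro h
    simp only [subtreeAt] at h
    by_cases hwc : w = c
    · simp [hwc] at h
    · by_cases hwd : w ∈ T.descendants c
      · simpa [hwc, hwd] using h
      · simp [hwc, hwd] at h
  · intro h
    have hw : w ∈ T.supp := mem_of_parent hwf h
    have hwd : w ∈ T.descendants c := ⟨hw, (isAncestor_parent h).trans hu.2⟩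
    have hwc : w ≠ c := by
      rintro rfl
      -- parent c = some u with u ∈ desc c: contradiction
      exact not_mem_descendants_of_parent hwf h hu
    rw [subtree_parent_eq hwf hwd hwc]; exact h

lemma subtree_flat {c u : V} (hc : T.parent c = some u) (hflat : T.Flat G) :
    (T.subtreeAt c).Flat G := by
  have hcs : c ∈ T.supp := mem_of_parent hwf hc
  have hcd : c ∈ T.descendants c := self_mem_descendants hcs
  refine ⟨subtree_wf hwf hc, ?_, ?_⟩
  · intro u' hu' a ha b hb
    have hu'd : u' ∈ T.descendants c := hu'
    rw [subtree_descendants hwf hu'd] at ha hb ⊢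
    exact hflat.2.1 u' hu'd.1 a ha b hb
  · intro u' hu' c' hc' w
    have hu'd : u' ∈ T.descendants c := hu'
    rw [subtree_children hwf hu'd] at hc'
    rw [subtree_descendants hwf hu'd,
        subtree_descendants hwf ⟨mem_of_parent hwf hc', (isAncestor_parent hc').trans hu'd.2⟩]
    exact hflat.2.2 u' hu'd.1 c' hc' w

end Sub
end RTree
namespace RTree
variable {V : Type u} {G : SimpleGraph V} {T : RTree V}

lemma flat_of_rec (h : IsSearchTreeRec G T) : T.Flat G := by
  induction h with
  | intro T hwf hconn hcomp hrec ih =>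
    refine ⟨hwf, ?_, ?_⟩
    · intro u hu a ha b hb
      by_cases hur : u = T.root
      · subst hur
        rw [descendants_root hwf] at ha hb ⊢
        exact hconn a ha b hb
      · obtain ⟨c, hc, hucd⟩ := exists_child hwf hu hur (hwf.2.2.2.2 u hu)
        have hflat := ih c hc
        have hud : u ∈ (T.subtreeAt c).descendants u := by
          rw [subtree_descendants hwf hucd]
          exact self_mem_descendants hu
        have := hflat.2.1 u hucd a ?_ b ?_
        · rwa [subtree_descendants hwf hucd] at this
        · rwa [subtree_descendants hwf hucd]
        · rwa [subtree_descendants hwf hucd]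
    · intro u hu c' hc' w
      by_cases hur : u = T.root
      · subst hur
        rw [descendants_root hwf]
        exact hcomp c' hc' w
      · obtain ⟨c, hc, hucd⟩ := exists_child hwf hu hur (hwf.2.2.2.2 u hu)
        have hflat := ih c hc
        have hc'' : (T.subtreeAt c).parent c' = some u :=
          (subtree_children hwf hucd).2 hc'
        have := hflat.2.2 u hucd c' hc'' w
        rwa [subtree_descendants hwf hucd,
          subtree_descendants hwf ⟨mem_of_parent hwf hc', (isAncestor_parent hc').trans hucd.2⟩]
          at this

lemma rec_of_flat [Fintype V] (h : T.Flat G) : IsSearchTreeRec G T := by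
  suffices H : ∀ n (T : RTree V), T.supp.ncard ≤ n → T.Flat G → IsSearchTreeRec G T by
    exact H T.supp.ncard T le_rfl h
  intro n
  induction n with
  | zero =>
    intro T hn hflat
    exfalso
    have h2 : 0 < T.supp.ncard := (Set.ncard_pos (Set.toFinite _)).mpr ⟨T.root, hflat.1.1⟩
    omega
  | succ n ih =>
    intro T hn hflat
    have hwf := hflat.1
    refine IsSearchTreeRec.intro T hwf ?_ ?_ ?_
    · intro a ha b hb
      have := hflat.2.1 T.root hwf.1 a ?_ b ?_
      · rwa [descendants_root hwf] at this
      · rw [descendants_root hwf]; exact ha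
      · rw [descendants_root hwf]; exact hb
    · intro c hc w
      have := hflat.2.2 T.root hwf.1 c hc w
      rwa [descendants_root hwf] at this
    · intro c hc
      apply ih
      · have hsub : (T.subtreeAt c).supp = T.descendants c := rfl
        rw [hsub]
        have hlt : (T.descendants c).ncard < T.supp.ncard := by
          have h1 : T.descendants c ⊂ T.descendants T.root := by
            rw [descendants_root hwf]
            have := descendants_ssubset hwf hc
            rwa [descendants_root hwf] at this
          rw [descendants_root hwf] at h1
          exact Set.ncard_lt_ncard h1 (Set.toFinite _)
        omega
      · exact subtree_flat hwf hc hflat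

/-- Each child subtree contains a neighbour of its parent. -/
lemma child_neighbor (hflat : T.Flat G) {u c : V} (hu : u ∈ T.supp)
    (hc : T.parent c = some u) : ∃ z ∈ T.descendants c, G.Adj u z := by
  have hwf := hflat.1
  have hcs : c ∈ T.supp := mem_of_parent hwf hc
  have hcd : c ∈ T.descendants u := ⟨hcs, isAncestor_parent hc⟩
  have hreach : reachWithin G (T.descendants u) c u :=
    hflat.2.1 u hu c hcd u (self_mem_descendants hu)
  have hunot : u ∉ T.descendants c := not_mem_descendants_of_parent hwf hc
  -- induct along the path
  suffices H : ∀ a, reachWithin G (T.descendants u) a u → a ∈ T.descendants c →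
      ∃ z ∈ T.descendants c, G.Adj u z by
    exact H c hreach (self_mem_descendants hcs)
  intro a hr
  induction hr using Relation.ReflTransGen.head_induction_on with
  | refl => exact fun ha => absurd ha hunot
  | @head z y hstep hrest ih =>
    intro hz
    by_cases hyu : y = u
    · subst hyu; exact ⟨z, hz, hstep.2.2.symm⟩
    · have hy : y ∈ T.descendants c := by
        rw [hflat.2.2 u hu c hc y]
        refine ⟨hstep.2.1, hyu, ?_⟩
        have hzr : reachWithin G (T.descendants u \ {u}) c z :=
          ((hflat.2.2 u hu c hc z).1 hz).2.2
        exact hzr.tail ⟨⟨hstep.1, fun h => hunot (h ▸ hz)⟩, ⟨hstep.2.1, hyu⟩, hstep.2.2⟩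
      exact ih hy

/-- Adjacent vertices in a search tree are comparable. -/
lemma adj_comparable [Fintype V] (hflat : T.Flat G) {a b : V}
    (ha : a ∈ T.supp) (hb : b ∈ T.supp) (hadj : G.Adj a b) :
    T.isAncestor a b ∨ T.isAncestor b a := by
  have hwf := hflat.1
  suffices H : ∀ n (u : V), (T.descendants u).ncard ≤ n → u ∈ T.supp →
      a ∈ T.descendants u → b ∈ T.descendants u →
      T.isAncestor a b ∨ T.isAncestor b a by
    refine H (T.descendants T.root).ncard T.root le_rfl hwf.1 ?_ ?_ <;>
      rw [descendants_root hwf] <;> assumption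
  intro n
  induction n with
  | zero =>
    intro u hn hu hau hbu
    exfalso
    have h2 : 0 < (T.descendants u).ncard := (Set.ncard_pos (Set.toFinite _)).mpr ⟨u, self_mem_descendants hu⟩
    omega
  | succ n ih =>
    intro u hn hu hau hbu
    by_cases hua : a = u
    · subst hua; exact Or.inl hbu.2
    by_cases hub : b = u
    · subst hub; exact Or.inr hau.2
    obtain ⟨c, hc, hacd⟩ := exists_child hwf hau.1 hua hau.2
    have hbc : b ∈ T.descendants c := by
      rw [hflat.2.2 u hu c hc b]
      refine ⟨hbu, hub, ?_⟩
      have : reachWithin G (T.descendants u \ {u}) c a :=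
        ((hflat.2.2 u hu c hc a).1 hacd).2.2
      exact this.tail ⟨⟨hau, hua⟩, ⟨hbu, hub⟩, hadj⟩
    refine ih c ?_ (mem_of_parent hwf hc) hacd hbc
    have hlt : (T.descendants c).ncard < (T.descendants u).ncard :=
      Set.ncard_lt_ncard (descendants_ssubset hwf hc) (Set.toFinite _)
    omega

end RTree
namespace RTree
variable {V : Type u} {G : SimpleGraph V} {T : RTree V} {x v : V}

section AncAt
variable (hwf : T.WF) (hv : v ∈ T.supp)
include hwf hv

lemma pIter_ancAt {i : ℕ} (hi : i ≤ T.depthOf v) :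
    T.pIter (T.depthOf v - i) v = some (T.ancAt v i) := by
  have hd := pIter_depth hwf hv
  have hsplit : T.pIter (T.depthOf v) v
      = (T.pIter (T.depthOf v - i) v).bind (T.pIter i) := by
    rw [← pIter_add]; congr 1; omega
  cases hz : T.pIter (T.depthOf v - i) v with
  | none => rw [hz] at hsplit; rw [hd] at hsplit; exact absurd hsplit (by simp)
  | some z => simp [ancAt, hz]

lemma ancAt_mem {i : ℕ} (hi : i ≤ T.depthOf v) : T.ancAt v i ∈ T.supp :=
  pIter_mem hwf hv (pIter_ancAt hwf hv hi)

lemma depth_ancAt {i : ℕ} (hi : i ≤ T.depthOf v) : T.depthOf (T.ancAt v i) = i := by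
  have := depth_pIter hwf hv (pIter_ancAt hwf hv hi)
  omega

lemma ancAt_zero : T.ancAt v 0 = T.root := by
  have := pIter_ancAt hwf hv (Nat.zero_le _)
  rw [Nat.sub_zero, pIter_depth hwf hv] at this
  exact (Option.some_injective V this).symm

lemma ancAt_self : T.ancAt v (T.depthOf v) = v := by
  have := pIter_ancAt hwf hv (le_refl _)
  rw [Nat.sub_self] at this
  simp [pIter] at this
  exact this.symm

lemma parent_ancAt {i : ℕ} (hi1 : 1 ≤ i) (hi : i ≤ T.depthOf v) :
    T.parent (T.ancAt v i) = some (T.ancAt v (i - 1)) := by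
  have h1 := pIter_ancAt hwf hv hi
  have h2 := pIter_ancAt hwf hv (show i - 1 ≤ T.depthOf v by omega)
  have hsplit : T.pIter (T.depthOf v - (i - 1)) v
      = (T.pIter (T.depthOf v - i) v).bind (T.pIter 1) := by
    rw [← pIter_add]; congr 1; omega
  rw [h1, h2] at hsplit
  simp [pIter_one] at hsplit
  exact hsplit.symm

lemma ancAt_inj {i j : ℕ} (hi : i ≤ T.depthOf v) (hj : j ≤ T.depthOf v)
    (h : T.ancAt v i = T.ancAt v j) : i = j := by
  have h1 := depth_ancAt hwf hv hi
  have h2 := depth_ancAt hwf hv hj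
  rw [h] at h1; omega

lemma isAncestor_ancAt {i j : ℕ} (hij : i ≤ j) (hj : j ≤ T.depthOf v) :
    T.isAncestor (T.ancAt v i) (T.ancAt v j) := by
  have h1 := pIter_ancAt hwf hv (hij.trans hj)
  have h2 := pIter_ancAt hwf hv hj
  have hsplit : T.pIter (T.depthOf v - i) v
      = (T.pIter (T.depthOf v - j) v).bind (T.pIter (j - i)) := by
    rw [← pIter_add]; congr 1; omega
  rw [h1, h2] at hsplit
  simp at hsplit
  exact isAncestor_iff_pIter.2 ⟨j - i, hsplit.symm⟩

lemma isAncestor_ancAt_v {i : ℕ} (hi : i ≤ T.depthOf v) :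
    T.isAncestor (T.ancAt v i) v := by
  have := isAncestor_ancAt hwf hv hi (le_refl (T.depthOf v))
  rwa [ancAt_self hwf hv] at this

lemma eq_ancAt_of_isAncestor {z : V} (h : T.isAncestor z v) :
    T.depthOf z ≤ T.depthOf v ∧ z = T.ancAt v (T.depthOf z) := by
  obtain ⟨k, hk⟩ := isAncestor_iff_pIter.1 h
  have h1 : T.depthOf v = k + T.depthOf z := depth_pIter hwf hv hk
  refine ⟨by omega, ?_⟩
  have := pIter_ancAt hwf hv (show T.depthOf z ≤ T.depthOf v by omega)
  have hk' : T.depthOf v - T.depthOf z = k := by omega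
  rw [hk'] at this
  rw [hk] at this
  exact Option.some_injective V this

end AncAt
end RTree
namespace RTree
variable {V : Type u} {G : SimpleGraph V} {T : RTree V} {x v : V}

section Mid
variable {i : ℕ}

lemma mid_eq (hi1 : 1 ≤ i) (hid : i ≤ T.depthOf v) :
    T.insertAt i x v =
      ⟨insert x T.supp, T.root, fun w =>
        if w = x then some (T.ancAt v (i - 1))
        else if w = T.ancAt v i then some x
        else T.parent w⟩ := by
  rw [insertAt, if_neg (by omega), if_neg (by omega)]

variable (hwf : T.WF) (hv : v ∈ T.supp) (hx : x ∉ T.supp)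
  (hi1 : 1 ≤ i) (hid : i ≤ T.depthOf v)
include hwf hv hx hi1 hid

lemma mid_supp : (T.insertAt i x v).supp = insert x T.supp := by
  rw [mid_eq hi1 hid]

lemma mid_root : (T.insertAt i x v).root = T.root := by
  rw [mid_eq hi1 hid]

lemma mid_parent (w : V) : (T.insertAt i x v).parent w =
    if w = x then some (T.ancAt v (i - 1))
    else if w = T.ancAt v i then some x
    else T.parent w := by
  rw [mid_eq hi1 hid]

lemma mid_parent_x : (T.insertAt i x v).parent x = some (T.ancAt v (i - 1)) := by
  rw [mid_parent hwf hv hx hi1 hid]; simp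

lemma mid_parent_ai : (T.insertAt i x v).parent (T.ancAt v i) = some x := by
  rw [mid_parent hwf hv hx hi1 hid]
  have hne : T.ancAt v i ≠ x := fun h => hx (h ▸ ancAt_mem hwf hv hid)
  rw [if_neg hne, if_pos rfl]

lemma mid_parent_other {w : V} (hw1 : w ≠ x) (hw2 : w ≠ T.ancAt v i) :
    (T.insertAt i x v).parent w = T.parent w := by
  rw [mid_parent hwf hv hx hi1 hid, if_neg hw1, if_neg hw2]

/-- Lifting ancestor chains from `T` to the middle insertion. -/
lemma mid_lift {u w : V} (h : T.isAncestor u w) :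
    (T.insertAt i x v).isAncestor u w := by
  induction h using Relation.ReflTransGen.head_induction_on with
  | refl => exact Relation.ReflTransGen.refl
  | @head z y hstep hrest ih =>
    have hzx : z ≠ x := by
      intro h
      have hstep2 : T.parent z = some y := hstep
      rw [h, hwf.2.2.1 x hx] at hstep2
      exact absurd hstep2 (by simp)
    by_cases hza : z = T.ancAt v i
    · subst hza
      have hy : y = T.ancAt v (i - 1) := by
        have hp := parent_ancAt hwf hv hi1 hid
        have hstep2 : T.parent (T.ancAt v i) = some y := hstep
        rw [hstep2] at hp; exact Option.some_injective V hp
      subst hy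
      exact Relation.ReflTransGen.head (mid_parent_ai hwf hv hx hi1 hid)
        (Relation.ReflTransGen.head (mid_parent_x hwf hv hx hi1 hid) ih)
    · exact Relation.ReflTransGen.head
        (show (T.insertAt i x v).parentRel z y by
          simp only [parentRel]; rw [mid_parent_other hwf hv hx hi1 hid hzx hza]; exact hstep) ih

/-- Downward transfer: chains in the middle insertion ending at `u ∈ T.supp`. -/
lemma mid_chain_to {u : V} (hu : u ∈ T.supp) :
    ∀ {w}, (T.insertAt i x v).isAncestor u w →
      (w ∈ T.supp ∧ T.isAncestor u w) ∨ (w = x ∧ T.isAncestor u (T.ancAt v (i - 1))) := by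
  intro w h
  induction h using Relation.ReflTransGen.head_induction_on with
  | refl => exact Or.inl ⟨hu, Relation.ReflTransGen.refl⟩
  | @head z y hstep hrest ih =>
    have hstep' : (T.insertAt i x v).parent z = some y := hstep
    rw [mid_parent hwf hv hx hi1 hid] at hstep'
    by_cases hzx : z = x
    · subst hzx
      rw [if_pos rfl] at hstep'
      have hy : y = T.ancAt v (i - 1) := (Option.some_injective V hstep').symm
      subst hy
      rcases ih with ⟨_, hanc⟩ | ⟨hyx, _⟩
      · exact Or.inr ⟨rfl, hanc⟩
      · exact absurd (hyx ▸ ancAt_mem hwf hv (by omega : i - 1 ≤ T.depthOf v)) hx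
    · rw [if_neg hzx] at hstep'
      by_cases hza : z = T.ancAt v i
      · rw [if_pos hza] at hstep'
        have hy : y = x := (Option.some_injective V hstep').symm
        subst hy
        rcases ih with ⟨hxs, _⟩ | ⟨_, hanc⟩
        · exact absurd hxs hx
        · refine Or.inl ⟨hza ▸ ancAt_mem hwf hv hid, ?_⟩
          subst hza
          exact Relation.ReflTransGen.head (parent_ancAt hwf hv hi1 hid) hanc
      · rw [if_neg hza] at hstep'
        rcases ih with ⟨hys, hanc⟩ | ⟨hyx, _⟩
        · exact Or.inl ⟨mem_of_parent hwf hstep', Relation.ReflTransGen.head hstep' hanc⟩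
        · subst hyx
          exact absurd (parent_mem hwf hstep') hx

lemma mid_chain_to_x :
    ∀ {w}, (T.insertAt i x v).isAncestor x w →
      w = x ∨ (w ∈ T.supp ∧ T.isAncestor (T.ancAt v i) w) := by
  intro w h
  induction h using Relation.ReflTransGen.head_induction_on with
  | refl => exact Or.inl rfl
  | @head z y hstep hrest ih =>
    have hstep' : (T.insertAt i x v).parent z = some y := hstep
    rw [mid_parent hwf hv hx hi1 hid] at hstep'
    by_cases hzx : z = x
    · exact Or.inl hzx
    · rw [if_neg hzx] at hstep'
      by_cases hza : z = T.ancAt v i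
      · rw [if_pos hza] at hstep'
        exact Or.inr ⟨hza ▸ ancAt_mem hwf hv hid, hza ▸ Relation.ReflTransGen.refl⟩
      · rw [if_neg hza] at hstep'
        rcases ih with hyx | ⟨hys, hanc⟩
        · subst hyx; exact absurd (parent_mem hwf hstep') hx
        · exact Or.inr ⟨mem_of_parent hwf hstep', Relation.ReflTransGen.head hstep' hanc⟩

lemma mid_desc_x :
    (T.insertAt i x v).descendants x = insert x (T.descendants (T.ancAt v i)) := by
  ext w
  rw [mem_descendants, mid_supp hwf hv hx hi1 hid]
  constructor
  · rintro ⟨hw1, hw2⟩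
    rcases mid_chain_to_x hwf hv hx hi1 hid hw2 with rfl | ⟨hws, hanc⟩
    · exact Set.mem_insert _ _
    · exact Set.mem_insert_of_mem _ ⟨hws, hanc⟩
  · rintro (rfl | ⟨hws, hanc⟩)
    · exact ⟨Set.mem_insert _ _, Relation.ReflTransGen.refl⟩
    · refine ⟨Set.mem_insert_of_mem _ hws, ?_⟩
      refine Relation.ReflTransGen.trans (mid_lift hwf hv hx hi1 hid hanc)
        (Relation.ReflTransGen.single ?_)
      exact mid_parent_ai hwf hv hx hi1 hid

lemma mid_desc_of_anc {u : V} (hu : T.isAncestor u (T.ancAt v (i - 1))) :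
    (T.insertAt i x v).descendants u = insert x (T.descendants u) := by
  have hus : u ∈ T.supp := mem_of_isAncestor hwf (ancAt_mem hwf hv (by omega)) hu
  ext w
  rw [mem_descendants, mid_supp hwf hv hx hi1 hid]
  constructor
  · rintro ⟨hw1, hw2⟩
    rcases mid_chain_to hwf hv hx hi1 hid hus hw2 with ⟨hws, hanc⟩ | ⟨rfl, _⟩
    · exact Set.mem_insert_of_mem _ ⟨hws, hanc⟩
    · exact Set.mem_insert _ _
  · rintro (rfl | ⟨hws, hanc⟩)
    · refine ⟨Set.mem_insert _ _, ?_⟩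
      refine Relation.ReflTransGen.trans (Relation.ReflTransGen.single ?_)
        (mid_lift hwf hv hx hi1 hid hu)
      exact mid_parent_x hwf hv hx hi1 hid
    · exact ⟨Set.mem_insert_of_mem _ hws, mid_lift hwf hv hx hi1 hid hanc⟩

lemma mid_desc_of_not_anc {u : V} (hus : u ∈ T.supp)
    (hu : ¬ T.isAncestor u (T.ancAt v (i - 1))) :
    (T.insertAt i x v).descendants u = T.descendants u := by
  ext w
  rw [mem_descendants, mid_supp hwf hv hx hi1 hid]
  constructor
  · rintro ⟨hw1, hw2⟩
    rcases mid_chain_to hwf hv hx hi1 hid hus hw2 with ⟨hws, hanc⟩ | ⟨rfl, hanc⟩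
    · exact ⟨hws, hanc⟩
    · exact absurd hanc hu
  · rintro ⟨hws, hanc⟩
    exact ⟨Set.mem_insert_of_mem _ hws, mid_lift hwf hv hx hi1 hid hanc⟩

end Mid
end RTree
namespace RTree
variable {V : Type u} {G : SimpleGraph V} {T : RTree V} {x v : V}

section Mid2
variable {i : ℕ}
variable (hflat : T.Flat G) (hv : v ∈ T.supp) (hx : x ∉ T.supp)
  (hvx : G.Adj v x)
  (hN : ∀ z ∈ T.supp, G.Adj x z → T.isAncestor z v ∨ T.isAncestor v z)
  (hi1 : 1 ≤ i) (hid : i ≤ T.depthOf v)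
include hflat hv hx hi1 hid

lemma mid_ai_ne_root : T.ancAt v i ≠ T.root := by
  have hwf := hflat.1
  intro h
  have := depth_ancAt hwf hv hid
  rw [h, depth_root hwf] at this; omega

lemma mid_not_anc_ai : ¬ T.isAncestor (T.ancAt v i) (T.ancAt v (i - 1)) := by
  have hwf := hflat.1
  intro h
  have := depth_le_of_isAncestor hwf (ancAt_mem hwf hv (by omega : i - 1 ≤ T.depthOf v)) h
  rw [depth_ancAt hwf hv hid, depth_ancAt hwf hv (by omega : i - 1 ≤ T.depthOf v)] at this
  omega

lemma mid_wf : (T.insertAt i x v).WF := by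
  have hwf := hflat.1
  have hrx : T.root ≠ x := fun h => hx (h ▸ hwf.1)
  refine ⟨?_, ?_, ?_, ?_, ?_⟩
  · rw [mid_supp hwf hv hx hi1 hid, mid_root hwf hv hx hi1 hid]
    exact Set.mem_insert_of_mem _ hwf.1
  · rw [mid_root hwf hv hx hi1 hid,
      mid_parent_other hwf hv hx hi1 hid hrx (Ne.symm (mid_ai_ne_root hflat hv hx hi1 hid))]
    exact hwf.2.1
  · intro w hw
    rw [mid_supp hwf hv hx hi1 hid] at hw
    have hw1 : w ≠ x := fun h => hw (h ▸ Set.mem_insert _ _)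
    have hw2 : w ∉ T.supp := fun h => hw (Set.mem_insert_of_mem _ h)
    have hw3 : w ≠ T.ancAt v i := fun h => hw2 (h ▸ ancAt_mem hwf hv hid)
    rw [mid_parent_other hwf hv hx hi1 hid hw1 hw3]
    exact hwf.2.2.1 w hw2
  · intro w hw hwr
    rw [mid_supp hwf hv hx hi1 hid] at hw
    rw [mid_root hwf hv hx hi1 hid] at hwr
    rw [mid_supp hwf hv hx hi1 hid]
    by_cases hw1 : w = x
    · subst hw1
      exact ⟨T.ancAt v (i-1),
        Set.mem_insert_of_mem _ (ancAt_mem hwf hv (by omega)),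
        mid_parent_x hwf hv hx hi1 hid⟩
    · by_cases hw2 : w = T.ancAt v i
      · subst hw2
        exact ⟨x, Set.mem_insert _ _, mid_parent_ai hwf hv hx hi1 hid⟩
      · rcases hw with rfl | hws
        · exact absurd rfl hw1
        · obtain ⟨p, hp, hp2⟩ := hwf.2.2.2.1 w hws hwr
          exact ⟨p, Set.mem_insert_of_mem _ hp,
            by rw [mid_parent_other hwf hv hx hi1 hid hw1 hw2]; exact hp2⟩
  · intro w hw
    rw [mid_supp hwf hv hx hi1 hid] at hw
    rw [mid_root hwf hv hx hi1 hid]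
    rcases hw with rfl | hws
    · refine Relation.ReflTransGen.trans (Relation.ReflTransGen.single ?_)
        (mid_lift hwf hv hx hi1 hid
          (hwf.2.2.2.2 _ (ancAt_mem hwf hv (show i - 1 ≤ T.depthOf v by omega))))
      exact mid_parent_x hwf hv hx hi1 hid
    · exact mid_lift hwf hv hx hi1 hid (hwf.2.2.2.2 w hws)

include hN in
lemma x_nbr_in {j : ℕ} (hj : j + 1 ≤ i) {z : V}
    (hz : z ∈ T.descendants (T.ancAt v j)) (hzne : z ≠ T.ancAt v j)
    (hadj : G.Adj x z) : z ∈ T.descendants (T.ancAt v (j + 1)) := by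
  have hwf := hflat.1
  have hjd : j ≤ T.depthOf v := by omega
  have hj1d : j + 1 ≤ T.depthOf v := by omega
  rcases hN z hz.1 hadj with h | h
  · obtain ⟨hk, hke⟩ := eq_ancAt_of_isAncestor hwf hv h
    have hjk : j ≤ T.depthOf z := by
      have := depth_le_of_isAncestor hwf hz.1 hz.2
      rwa [depth_ancAt hwf hv hjd] at this
    have hjk' : j + 1 ≤ T.depthOf z := by
      rcases Nat.eq_or_lt_of_le hjk with heq | hlt
      · exfalso; apply hzne; rw [hke, ← heq]
      · omega
    refine ⟨hz.1, ?_⟩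
    rw [hke]
    exact isAncestor_ancAt hwf hv hjk' hk
  · exact ⟨hz.1, h.trans (isAncestor_ancAt_v hwf hv hj1d)⟩

include hvx in
lemma mid_reach_v {j : ℕ} (hj : j < i) :
    ∀ w ∈ insert x (T.descendants (T.ancAt v (j + 1))),
      reachWithin G (insert x (T.descendants (T.ancAt v j) \ {T.ancAt v j})) v w := by
  have hwf := hflat.1
  have hjd : j ≤ T.depthOf v := by omega
  have hj1d : j + 1 ≤ T.depthOf v := by omega
  have hvd : v ∈ T.descendants (T.ancAt v j) \ {T.ancAt v j} := by
    refine ⟨⟨hv, isAncestor_ancAt_v hwf hv hjd⟩, ?_⟩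
    intro h
    have : T.depthOf v = j := by
      have := depth_ancAt hwf hv hjd
      simp only [Set.mem_singleton_iff] at h
      rw [← h] at this; exact this.symm ▸ rfl
    omega
  have hvd' : T.depthOf v ≠ j := by omega
  intro w hw
  rcases hw with rfl | hwd
  · exact reachWithin.single (Set.mem_insert_of_mem _ hvd) (Set.mem_insert _ _) hvx
  · have hcomp := hflat.2.2 (T.ancAt v j) (ancAt_mem hwf hv hjd) (T.ancAt v (j + 1))
      (parent_ancAt hwf hv (by omega) hj1d)
    have hrv : reachWithin G (T.descendants (T.ancAt v j) \ {T.ancAt v j})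
        (T.ancAt v (j + 1)) v := ((hcomp v).1 ⟨hv, isAncestor_ancAt_v hwf hv hj1d⟩).2.2
    have hrw : reachWithin G (T.descendants (T.ancAt v j) \ {T.ancAt v j})
        (T.ancAt v (j + 1)) w := ((hcomp w).1 hwd).2.2
    exact reachWithin.mono (Set.subset_insert _ _) ((reachWithin.symm hrv).trans hrw)

include hN in
lemma mid_closed_special {j : ℕ} (hj : j < i) :
    ∀ z y, z ∈ insert x (T.descendants (T.ancAt v (j + 1))) →
      y ∈ insert x (T.descendants (T.ancAt v j) \ {T.ancAt v j}) → G.Adj z y →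
      y ∈ insert x (T.descendants (T.ancAt v (j + 1))) := by
  have hwf := hflat.1
  have hjd : j ≤ T.depthOf v := by omega
  have hj1d : j + 1 ≤ T.depthOf v := by omega
  intro z y hz hy hadj
  rcases hy with rfl | hyd
  · exact Set.mem_insert _ _
  · rcases hz with rfl | hzd
    · exact Set.mem_insert_of_mem _
        (x_nbr_in hflat hv hx hN hi1 hid (by omega) hyd.1 hyd.2 hadj)
    · refine Set.mem_insert_of_mem _ ?_
      have hcomp := hflat.2.2 (T.ancAt v j) (ancAt_mem hwf hv hjd) (T.ancAt v (j + 1))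
        (parent_ancAt hwf hv (by omega) hj1d)
      have hrz : reachWithin G (T.descendants (T.ancAt v j) \ {T.ancAt v j})
          (T.ancAt v (j + 1)) z := ((hcomp z).1 hzd).2.2
      have hzd' : z ∈ T.descendants (T.ancAt v j) \ {T.ancAt v j} :=
        ⟨((hcomp z).1 hzd).1, ((hcomp z).1 hzd).2.1⟩
      refine (hcomp y).2 ⟨hyd.1, hyd.2, hrz.tail ⟨hzd', hyd, hadj⟩⟩

include hN in
lemma mid_closed_other {j : ℕ} (hj : j < i) {c : V}
    (hc : T.parent c = some (T.ancAt v j)) (hne : c ≠ T.ancAt v (j + 1)) :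
    ∀ z y, z ∈ T.descendants c →
      y ∈ insert x (T.descendants (T.ancAt v j) \ {T.ancAt v j}) → G.Adj z y →
      y ∈ T.descendants c := by
  have hwf := hflat.1
  have hjd : j ≤ T.depthOf v := by omega
  have hj1d : j + 1 ≤ T.depthOf v := by omega
  intro z y hz hy hadj
  have hzdu : z ∈ T.descendants (T.ancAt v j) :=
    descendants_subset (isAncestor_parent hc) hz
  have hzne : z ≠ T.ancAt v j := by
    rintro rfl; exact not_mem_descendants_of_parent hwf hc hz
  rcases hy with rfl | hyd
  · exfalso
    have := x_nbr_in hflat hv hx hN hi1 hid (by omega) hzdu hzne hadj.symm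
    exact descendants_disjoint hwf hc (parent_ancAt hwf hv (by omega) hj1d) hne hz this
  · have hcomp := hflat.2.2 (T.ancAt v j) (ancAt_mem hwf hv hjd) c hc
    have hrz : reachWithin G (T.descendants (T.ancAt v j) \ {T.ancAt v j}) c z :=
      ((hcomp z).1 hz).2.2
    exact (hcomp y).2 ⟨hyd.1, hyd.2, hrz.tail ⟨⟨hzdu, hzne⟩, hyd, hadj⟩⟩

end Mid2
end RTree
namespace RTree
variable {V : Type u} {G : SimpleGraph V} {T : RTree V} {x v : V}

lemma insert_diff_singleton' {s : Set V} {a b : V} (h : a ≠ b) :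
    insert a s \ {b} = insert a (s \ {b}) := by
  ext w
  simp only [Set.mem_diff, Set.mem_insert_iff, Set.mem_singleton_iff]
  constructor
  · rintro ⟨rfl | hw, hne⟩
    · exact Or.inl rfl
    · exact Or.inr ⟨hw, hne⟩
  · rintro (rfl | ⟨hw, hne⟩)
    · exact ⟨Or.inl rfl, h⟩
    · exact ⟨Or.inr hw, hne⟩

section Mid3
variable {i : ℕ}
variable (hflat : T.Flat G) (hv : v ∈ T.supp) (hx : x ∉ T.supp)
  (hvx : G.Adj v x)
  (hN : ∀ z ∈ T.supp, G.Adj x z → T.isAncestor z v ∨ T.isAncestor v z)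
  (hi1 : 1 ≤ i) (hid : i ≤ T.depthOf v)
include hflat hv hx hvx hN hi1 hid

lemma mid_flat : (T.insertAt i x v).Flat G := by
  have hwf := hflat.1
  have him1d : i - 1 ≤ T.depthOf v := by omega
  refine ⟨mid_wf hflat hv hx hi1 hid, ?_, ?_⟩
  · -- connectivity of descendant sets
    intro u hu a ha b hb
    rw [mid_supp hwf hv hx hi1 hid] at hu
    rcases hu with rfl | hus
    · rw [mid_desc_x hwf hv hx hi1 hid] at ha hb ⊢
      have key : ∀ w ∈ insert u (T.descendants (T.ancAt v i)),
          reachWithin G (insert u (T.descendants (T.ancAt v i))) v w := by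
        intro w hw
        have hvd : v ∈ T.descendants (T.ancAt v i) := ⟨hv, isAncestor_ancAt_v hwf hv hid⟩
        rcases hw with rfl | hwd
        · exact reachWithin.single (Set.mem_insert_of_mem _ hvd) (Set.mem_insert _ _) hvx
        · exact reachWithin.mono (Set.subset_insert _ _)
            (hflat.2.1 (T.ancAt v i) (ancAt_mem hwf hv hid) v hvd w hwd)
      exact (reachWithin.symm (key a ha)).trans (key b hb)
    · by_cases hanc : T.isAncestor u (T.ancAt v (i - 1))
      · rw [mid_desc_of_anc hwf hv hx hi1 hid hanc] at ha hb ⊢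
        have hvd : v ∈ T.descendants u :=
          ⟨hv, (isAncestor_ancAt_v hwf hv him1d).trans hanc⟩
        have key : ∀ w ∈ insert x (T.descendants u),
            reachWithin G (insert x (T.descendants u)) v w := by
          intro w hw
          rcases hw with rfl | hwd
          · exact reachWithin.single (Set.mem_insert_of_mem _ hvd) (Set.mem_insert _ _) hvx
          · exact reachWithin.mono (Set.subset_insert _ _) (hflat.2.1 u hus v hvd w hwd)
        exact (reachWithin.symm (key a ha)).trans (key b hb)
      · rw [mid_desc_of_not_anc hwf hv hx hi1 hid hus hanc] at ha hb ⊢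
        exact hflat.2.1 u hus a ha b hb
  · -- component condition
    intro u hu c hc w
    rw [mid_supp hwf hv hx hi1 hid] at hu
    have hcp := hc
    rw [mid_parent hwf hv hx hi1 hid] at hcp
    rcases hu with rfl | hus
    · -- u = x : the only child is ancAt v i
      have hcai : c = T.ancAt v i := by
        by_cases h1 : c = u
        · rw [if_pos h1] at hcp
          exact absurd (Option.some_injective V hcp ▸ ancAt_mem hwf hv him1d) hx
        · rw [if_neg h1] at hcp
          by_cases h2 : c = T.ancAt v i
          · exact h2
          · rw [if_neg h2] at hcp
            exact absurd (parent_mem hwf hcp) hx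
      subst hcai
      rw [mid_desc_x hwf hv hx hi1 hid,
        mid_desc_of_not_anc hwf hv hx hi1 hid (ancAt_mem hwf hv hid)
          (mid_not_anc_ai hflat hv hx hi1 hid),
        Set.insert_diff_self_of_notMem (fun h => hx h.1)]
      constructor
      · intro hw
        exact ⟨Set.mem_insert_of_mem _ hw, fun h => hx (h ▸ hw.1),
          hflat.2.1 (T.ancAt v i) (ancAt_mem hwf hv hid)
            (T.ancAt v i) (self_mem_descendants (ancAt_mem hwf hv hid)) w hw⟩
      · rintro ⟨hw1, hw2, _⟩
        rcases hw1 with rfl | hw1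
        · exact absurd rfl hw2
        · exact hw1
    · by_cases hanc : T.isAncestor u (T.ancAt v (i - 1))
      · -- u is an ancestor of ancAt v (i-1), i.e. u = ancAt v j with j < i
        have huv : T.isAncestor u v := (isAncestor_ancAt_v hwf hv him1d).trans hanc
        obtain ⟨hjd, hue⟩ := eq_ancAt_of_isAncestor hwf hv huv
        have hji : T.depthOf u < i := by
          have := depth_le_of_isAncestor hwf (ancAt_mem hwf hv him1d) hanc
          rw [depth_ancAt hwf hv him1d] at this; omega
        obtain ⟨j, hj, rfl⟩ : ∃ j, j < i ∧ u = T.ancAt v j :=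
          ⟨T.depthOf u, hji, hue⟩
        have hjd' : j ≤ T.depthOf v := by omega
        have hj1d : j + 1 ≤ T.depthOf v := by omega
        have hxaj : x ≠ T.ancAt v j := by
          intro h
          rw [h] at hx
          exact hx (ancAt_mem hwf hv hjd')
        rw [mid_desc_of_anc hwf hv hx hi1 hid
            (isAncestor_ancAt hwf hv (by omega : j ≤ i - 1) him1d),
          insert_diff_singleton' hxaj]
        -- the main bidirectional claim for the special child subtree
        have main : ∀ c', c' ∈ insert x (T.descendants (T.ancAt v (j + 1))) →
            reachWithin G (insert x (T.descendants (T.ancAt v j) \ {T.ancAt v j})) v c' →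
            (w ∈ insert x (T.descendants (T.ancAt v (j + 1))) ↔
              w ∈ insert x (T.descendants (T.ancAt v j)) ∧ w ≠ T.ancAt v j ∧
              reachWithin G (insert x (T.descendants (T.ancAt v j) \ {T.ancAt v j})) c' w) := by
          intro c' hc' hrc'
          constructor
          · intro hw
            refine ⟨?_, ?_, (reachWithin.symm hrc').trans
                (mid_reach_v hflat hv hx hvx hi1 hid hj w hw)⟩
            · rcases hw with hwx | hwd
              · rw [hwx]; exact Set.mem_insert _ _
              · exact Set.mem_insert_of_mem _
                  (descendants_subset (isAncestor_ancAt hwf hv (by omega : j ≤ j + 1) hj1d) hwd)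
            · rcases hw with hwx | hwd
              · rw [hwx]; exact hxaj
              · intro h
                rw [h] at hwd
                exact not_mem_descendants_of_parent hwf
                  (parent_ancAt hwf hv (by omega) hj1d) hwd
          · rintro ⟨hw1, hw2, hr⟩
            exact reachWithin.closed (mid_closed_special hflat hv hx hN hi1 hid hj) hc' hr
        have hvaj : v ∈ T.descendants (T.ancAt v j) \ {T.ancAt v j} := by
          refine ⟨⟨hv, isAncestor_ancAt_v hwf hv hjd'⟩, fun h => ?_⟩
          have hda := depth_ancAt hwf hv hjd'
          have : v = T.ancAt v j := h
          rw [← this] at hda; omega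
        by_cases hcx : c = x
        · rw [if_pos hcx] at hcp
          have hji' : j = i - 1 := by
            have h2 := Option.some_injective V hcp
            exact (ancAt_inj hwf hv him1d hjd' h2).symm
          rw [hcx, mid_desc_x hwf hv hx hi1 hid,
            show T.ancAt v i = T.ancAt v (j + 1) by rw [show j + 1 = i by omega]]
          exact main x (Set.mem_insert _ _)
            (reachWithin.single (Set.mem_insert_of_mem _ hvaj) (Set.mem_insert _ _) hvx)
        · rw [if_neg hcx] at hcp
          have hcai : c ≠ T.ancAt v i := by
            rintro rfl
            rw [if_pos rfl] at hcp
            exact hx (Option.some_injective V hcp ▸ ancAt_mem hwf hv hjd')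
          rw [if_neg hcai] at hcp
          -- hcp : T.parent c = some (ancAt v j)
          by_cases hcaj : c = T.ancAt v (j + 1)
          · subst hcaj
            have hj1i : j + 1 ≤ i - 1 := by
              rcases Nat.lt_or_ge (j + 1) i with h | h
              · omega
              · exfalso; exact hcai (by rw [show j + 1 = i by omega])
            rw [mid_desc_of_anc hwf hv hx hi1 hid (isAncestor_ancAt hwf hv hj1i him1d)]
            exact main (T.ancAt v (j + 1))
              (Set.mem_insert_of_mem _ (self_mem_descendants (ancAt_mem hwf hv hj1d)))
              (mid_reach_v hflat hv hx hvx hi1 hid hj _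
                (Set.mem_insert_of_mem _ (self_mem_descendants (ancAt_mem hwf hv hj1d))))
          · -- ordinary child of ancAt v j
            have hnc : ¬ T.isAncestor c (T.ancAt v (i - 1)) := by
              intro h
              have hcv : T.isAncestor c v := (isAncestor_ancAt_v hwf hv him1d).trans h
              obtain ⟨hkd, hke⟩ := eq_ancAt_of_isAncestor hwf hv hcv
              have hdc : T.depthOf c = j + 1 := by
                rw [depth_parent hwf hcp, depth_ancAt hwf hv hjd']
              exact hcaj (by rw [hke, hdc])
            rw [mid_desc_of_not_anc hwf hv hx hi1 hid (mem_of_parent hwf hcp) hnc]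
            constructor
            · intro hw
              have := (hflat.2.2 (T.ancAt v j) (ancAt_mem hwf hv hjd') c hcp w).1 hw
              exact ⟨Set.mem_insert_of_mem _ this.1, this.2.1,
                reachWithin.mono (Set.subset_insert _ _) this.2.2⟩
            · rintro ⟨hw1, hw2, hr⟩
              exact reachWithin.closed
                (mid_closed_other hflat hv hx hN hi1 hid hj hcp hcaj)
                (self_mem_descendants (mem_of_parent hwf hcp)) hr
      · -- u not an ancestor of ancAt v (i-1): everything unchanged
        have hcx : c ≠ x := by
          rintro rfl
          rw [if_pos rfl] at hcp
          exact hanc (Option.some_injective V hcp ▸ Relation.ReflTransGen.refl)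
        rw [if_neg hcx] at hcp
        have hcai : c ≠ T.ancAt v i := by
          rintro rfl
          rw [if_pos rfl] at hcp
          exact hx (Option.some_injective V hcp ▸ hus)
        rw [if_neg hcai] at hcp
        have hnc : ¬ T.isAncestor c (T.ancAt v (i - 1)) := fun h =>
          hanc (h.trans (isAncestor_parent hcp))
        rw [mid_desc_of_not_anc hwf hv hx hi1 hid hus hanc,
          mid_desc_of_not_anc hwf hv hx hi1 hid (mem_of_parent hwf hcp) hnc]
        exact hflat.2.2 u hus c hcp w

end Mid3
end RTree
namespace RTree
variable {V : Type u} {G : SimpleGraph V} {T : RTree V} {x v : V}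

lemma ext' {A B : RTree V} (h1 : A.supp = B.supp) (h2 : A.root = B.root)
    (h3 : ∀ w, A.parent w = B.parent w) : A = B := by
  cases A; cases B
  simp only [mk.injEq]
  exact ⟨h1, h2, funext h3⟩

section Zero
variable (hflat : T.Flat G) (hv : v ∈ T.supp) (hx : x ∉ T.supp) (hvx : G.Adj v x)
include hflat hv hx

lemma zero_eq : T.insertAt 0 x v =
    ⟨insert x T.supp, x, fun w =>
      if w = x then none else if w = T.root then some x else T.parent w⟩ := by
  rw [insertAt, if_pos rfl]

lemma zero_supp : (T.insertAt 0 x v).supp = insert x T.supp := by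
  rw [zero_eq hflat hv hx]

lemma zero_root : (T.insertAt 0 x v).root = x := by
  rw [zero_eq hflat hv hx]

lemma zero_parent (w : V) : (T.insertAt 0 x v).parent w =
    if w = x then none else if w = T.root then some x else T.parent w := by
  rw [zero_eq hflat hv hx]

lemma zero_lift {u w : V} (h : T.isAncestor u w) :
    (T.insertAt 0 x v).isAncestor u w := by
  have hwf := hflat.1
  induction h using Relation.ReflTransGen.head_induction_on with
  | refl => exact Relation.ReflTransGen.refl
  | @head z y hstep hrest ih =>
    have hstep2 : T.parent z = some y := hstep
    have hzx : z ≠ x := by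
      intro h; rw [h, hwf.2.2.1 x hx] at hstep2; exact absurd hstep2 (by simp)
    have hzr : z ≠ T.root := by
      intro h; rw [h, hwf.2.1] at hstep2; exact absurd hstep2 (by simp)
    refine Relation.ReflTransGen.head ?_ ih
    show (T.insertAt 0 x v).parent z = some y
    rw [zero_parent hflat hv hx, if_neg hzx, if_neg hzr]; exact hstep2

lemma zero_chain_to {u : V} (hu : u ∈ T.supp) :
    ∀ {w}, (T.insertAt 0 x v).isAncestor u w → w ∈ T.supp ∧ T.isAncestor u w := by
  have hwf := hflat.1
  intro w h
  induction h using Relation.ReflTransGen.head_induction_on with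
  | refl => exact ⟨hu, Relation.ReflTransGen.refl⟩
  | @head z y hstep hrest ih =>
    have hstep2 : (T.insertAt 0 x v).parent z = some y := hstep
    rw [zero_parent hflat hv hx] at hstep2
    by_cases hzx : z = x
    · rw [if_pos hzx] at hstep2; exact absurd hstep2 (by simp)
    · rw [if_neg hzx] at hstep2
      by_cases hzr : z = T.root
      · rw [if_pos hzr] at hstep2
        have hy : y = x := (Option.some_injective V hstep2).symm
        rw [hy] at ih
        exact absurd ih.1 hx
      · rw [if_neg hzr] at hstep2
        exact ⟨mem_of_parent hwf hstep2, Relation.ReflTransGen.head hstep2 ih.2⟩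

lemma zero_desc_x : (T.insertAt 0 x v).descendants x = insert x T.supp := by
  have hwf := hflat.1
  ext w
  rw [mem_descendants]
  constructor
  · rintro ⟨hw1, _⟩
    rw [zero_supp hflat hv hx] at hw1; exact hw1
  · intro hw
    refine ⟨by rw [zero_supp hflat hv hx]; exact hw, ?_⟩
    rcases hw with rfl | hws
    · exact Relation.ReflTransGen.refl
    · refine Relation.ReflTransGen.trans (zero_lift hflat hv hx (hwf.2.2.2.2 w hws))
        (Relation.ReflTransGen.single ?_)
      show (T.insertAt 0 x v).parent T.root = some x
      have hrx : T.root ≠ x := fun h => hx (h ▸ hwf.1)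
      rw [zero_parent hflat hv hx, if_neg hrx, if_pos rfl]

lemma zero_desc_of_mem {u : V} (hu : u ∈ T.supp) :
    (T.insertAt 0 x v).descendants u = T.descendants u := by
  ext w
  rw [mem_descendants, mem_descendants]
  constructor
  · rintro ⟨_, hw2⟩
    exact zero_chain_to hflat hv hx hu hw2
  · rintro ⟨hw1, hw2⟩
    exact ⟨by rw [zero_supp hflat hv hx]; exact Set.mem_insert_of_mem _ hw1,
      zero_lift hflat hv hx hw2⟩

include hvx in
lemma zero_flat : (T.insertAt 0 x v).Flat G := by
  have hwf := hflat.1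
  have hrx : T.root ≠ x := fun h => hx (h ▸ hwf.1)
  have hwf0 : (T.insertAt 0 x v).WF := by
    refine ⟨?_, ?_, ?_, ?_, ?_⟩
    · rw [zero_supp hflat hv hx, zero_root hflat hv hx]; exact Set.mem_insert _ _
    · rw [zero_root hflat hv hx, zero_parent hflat hv hx, if_pos rfl]
    · intro w hw
      rw [zero_supp hflat hv hx] at hw
      have hw1 : w ≠ x := fun h => hw (h ▸ Set.mem_insert _ _)
      have hw2 : w ∉ T.supp := fun h => hw (Set.mem_insert_of_mem _ h)
      have hw3 : w ≠ T.root := fun h => hw2 (h ▸ hwf.1)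
      rw [zero_parent hflat hv hx, if_neg hw1, if_neg hw3]
      exact hwf.2.2.1 w hw2
    · intro w hw hwx
      rw [zero_root hflat hv hx] at hwx
      rw [zero_supp hflat hv hx] at hw
      rw [zero_supp hflat hv hx]
      rw [zero_parent hflat hv hx, if_neg hwx]
      by_cases hwr : w = T.root
      · exact ⟨x, Set.mem_insert _ _, by rw [if_pos hwr]⟩
      · rcases hw with rfl | hws
        · exact absurd rfl hwx
        · obtain ⟨p, hp1, hp2⟩ := hwf.2.2.2.1 w hws hwr
          exact ⟨p, Set.mem_insert_of_mem _ hp1, by rw [if_neg hwr]; exact hp2⟩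
    · intro w hw
      rw [zero_supp hflat hv hx] at hw
      rw [zero_root hflat hv hx]
      have hmem : w ∈ (T.insertAt 0 x v).descendants x := by
        rw [zero_desc_x hflat hv hx]; exact hw
      exact hmem.2
  refine ⟨hwf0, ?_, ?_⟩
  · intro u hu a ha b hb
    rw [zero_supp hflat hv hx] at hu
    rcases hu with rfl | hus
    · rw [zero_desc_x hflat hv hx] at ha hb ⊢
      have key : ∀ w ∈ insert u T.supp, reachWithin G (insert u T.supp) v w := by
        intro w hw
        rcases hw with rfl | hws
        · exact reachWithin.single (Set.mem_insert_of_mem _ hv) (Set.mem_insert _ _) hvx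
        · have := hflat.2.1 T.root hwf.1 v ?_ w ?_
          · rw [descendants_root hwf] at this
            exact reachWithin.mono (Set.subset_insert _ _) this
          · rw [descendants_root hwf]; exact hv
          · rw [descendants_root hwf]; exact hws
      exact (reachWithin.symm (key a ha)).trans (key b hb)
    · rw [zero_desc_of_mem hflat hv hx hus] at ha hb ⊢
      exact hflat.2.1 u hus a ha b hb
  · intro u hu c hc w
    rw [zero_supp hflat hv hx] at hu
    rw [zero_parent hflat hv hx] at hc
    rcases hu with rfl | hus
    · -- u = x (renamed u), only child is the old root
      have hcr : c = T.root := by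
        by_cases h1 : c = u
        · rw [if_pos h1] at hc; exact absurd hc (by simp)
        · rw [if_neg h1] at hc
          by_cases h2 : c = T.root
          · exact h2
          · rw [if_neg h2] at hc
            exact absurd (parent_mem hwf hc) hx
      subst hcr
      rw [zero_desc_x hflat hv hx, zero_desc_of_mem hflat hv hx hwf.1,
        descendants_root hwf, Set.insert_diff_self_of_notMem hx]
      constructor
      · intro hw
        refine ⟨Set.mem_insert_of_mem _ hw, fun h => hx (h ▸ hw), ?_⟩
        have := hflat.2.1 T.root hwf.1 T.root (self_mem_descendants hwf.1) w ?_
        · rwa [descendants_root hwf] at this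
        · rw [descendants_root hwf]; exact hw
      · rintro ⟨hw1, hw2, _⟩
        rcases hw1 with rfl | hw1
        · exact absurd rfl hw2
        · exact hw1
    · -- u ∈ T.supp : unchanged
      have hcx : c ≠ x := by
        rintro rfl; rw [if_pos rfl] at hc; exact absurd hc (by simp)
      rw [if_neg hcx] at hc
      have hcr : c ≠ T.root := by
        rintro rfl; rw [if_pos rfl] at hc
        exact hx ((Option.some_injective V hc) ▸ hus)
      rw [if_neg hcr] at hc
      rw [zero_desc_of_mem hflat hv hx hus,
        zero_desc_of_mem hflat hv hx (mem_of_parent hwf hc)]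
      exact hflat.2.2 u hus c hc w

end Zero
end RTree
namespace RTree
variable {V : Type u} {G : SimpleGraph V} {T : RTree V} {x v : V}

section Rot
variable {i : ℕ}
variable (hflat : T.Flat G) (hv : v ∈ T.supp) (hx : x ∉ T.supp)
  (hvx : G.Adj v x)
  (hi : i < T.depthOf v)
include hflat hv hx hi

lemma succ_parent_x :
    (T.insertAt (i + 1) x v).parent x = some (T.ancAt v i) := by
  have hwf := hflat.1
  have := mid_parent_x hwf hv hx (by omega : 1 ≤ i + 1) (by omega : i + 1 ≤ T.depthOf v)
  rwa [Nat.add_sub_cancel] at this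

lemma succ_parent_ai :
    (T.insertAt (i + 1) x v).parent (T.ancAt v i) = T.parent (T.ancAt v i) := by
  have hwf := hflat.1
  refine mid_parent_other hwf hv hx (by omega) (by omega : i + 1 ≤ T.depthOf v) ?_ ?_
  · exact fun h => hx (h ▸ ancAt_mem hwf hv (by omega : i ≤ T.depthOf v))
  · intro h
    have := ancAt_inj hwf hv (by omega : i ≤ T.depthOf v) (by omega : i + 1 ≤ T.depthOf v) h
    omega

lemma succ_desc_ai1 :
    (T.insertAt (i + 1) x v).descendants (T.ancAt v (i + 1))
      = T.descendants (T.ancAt v (i + 1)) := by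
  have hwf := hflat.1
  have hna := mid_not_anc_ai hflat hv hx (by omega : 1 ≤ i + 1) (by omega : i + 1 ≤ T.depthOf v)
  rw [Nat.add_sub_cancel] at hna
  refine mid_desc_of_not_anc hwf hv hx (by omega) (by omega : i + 1 ≤ T.depthOf v)
    (ancAt_mem hwf hv (by omega : i + 1 ≤ T.depthOf v)) ?_
  rwa [Nat.add_sub_cancel]

lemma insert_ne_succ : T.insertAt i x v ≠ T.insertAt (i + 1) x v := by
  have hwf := hflat.1
  have hrootx : T.root ≠ x := fun h => hx (h ▸ hwf.1)
  intro h
  have hform := congrArg (fun t => RTree.parent t (T.ancAt v i)) h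
  have hl : (T.insertAt i x v).parent (T.ancAt v i) = some x := by
    rcases Nat.eq_zero_or_pos i with rfl | hi1
    · rw [ancAt_zero hwf hv, zero_parent hflat hv hx, if_neg hrootx, if_pos rfl]
    · exact mid_parent_ai hwf hv hx hi1 (by omega)
  have hr := succ_parent_ai hflat hv hx hi
  rw [hl, hr] at hform
  rcases Nat.eq_zero_or_pos i with rfl | hi1
  · rw [ancAt_zero hwf hv, hwf.2.1] at hform
    exact absurd hform (by simp)
  · rw [parent_ancAt hwf hv hi1 (by omega)] at hform
    exact hx ((Option.some_injective V hform) ▸ ancAt_mem hwf hv (by omega : i - 1 ≤ T.depthOf v))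

include hvx in
lemma insert_rotate_eq :
    T.insertAt i x v = rotate G (T.insertAt (i + 1) x v) (T.ancAt v i) x := by
  have hwf := hflat.1
  have hid : i ≤ T.depthOf v := by omega
  have hid1 : i + 1 ≤ T.depthOf v := by omega
  have haix : T.ancAt v i ≠ x := fun h => hx (h ▸ ancAt_mem hwf hv hid)
  have hrootx : T.root ≠ x := fun h => hx (h ▸ hwf.1)
  have hpt : T.parent (T.ancAt v (i + 1)) = some (T.ancAt v i) := by
    have h0 := parent_ancAt hwf hv (by omega : 1 ≤ i + 1) hid1
    rwa [Nat.add_sub_cancel] at h0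
  have hai1x : T.ancAt v (i + 1) ≠ x := fun h => hx (h ▸ ancAt_mem hwf hv hid1)
  have haii1 : T.ancAt v (i + 1) ≠ T.ancAt v i := fun h => by
    have := ancAt_inj hwf hv hid1 hid h; omega
  have hrp : ∀ w, (rotate G (T.insertAt (i + 1) x v) (T.ancAt v i) x).parent w =
      (if w = x then (T.insertAt (i + 1) x v).parent (T.ancAt v i)
       else if w = T.ancAt v i then some x
       else if (T.insertAt (i + 1) x v).parent w = some x then
         (if ∃ z ∈ (T.insertAt (i + 1) x v).descendants w, G.Adj (T.ancAt v i) z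
          then some (T.ancAt v i) else some x)
       else (T.insertAt (i + 1) x v).parent w) := fun w => rfl
  have hsupp' : (T.insertAt (i + 1) x v).supp = insert x T.supp :=
    mid_supp hwf hv hx (by omega) hid1
  have hroot' : (T.insertAt (i + 1) x v).root = T.root :=
    mid_root hwf hv hx (by omega) hid1
  have hmp : ∀ w, w ≠ x → w ≠ T.ancAt v (i + 1) →
      (T.insertAt (i + 1) x v).parent w = T.parent w :=
    fun w h1 h2 => mid_parent_other hwf hv hx (by omega) hid1 h1 h2
  have hmai1 : (T.insertAt (i + 1) x v).parent (T.ancAt v (i + 1)) = some x :=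
    mid_parent_ai hwf hv hx (by omega) hid1
  refine ext' ?_ ?_ ?_
  · show (T.insertAt i x v).supp = (T.insertAt (i + 1) x v).supp
    rw [hsupp']
    rcases Nat.eq_zero_or_pos i with rfl | hi1
    · exact zero_supp hflat hv hx
    · exact mid_supp hwf hv hx hi1 hid
  · show (T.insertAt i x v).root =
      (if (T.insertAt (i + 1) x v).root = T.ancAt v i then x
       else (T.insertAt (i + 1) x v).root)
    rw [hroot']
    rcases Nat.eq_zero_or_pos i with rfl | hi1
    · rw [ancAt_zero hwf hv, if_pos rfl, zero_root hflat hv hx]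
    · rw [if_neg (Ne.symm (mid_ai_ne_root hflat hv hx hi1 hid)), mid_root hwf hv hx hi1 hid]
  · intro w
    rw [hrp w]
    by_cases hwx : w = x
    · subst hwx
      rw [if_pos rfl, succ_parent_ai hflat hv hx hi]
      rcases Nat.eq_zero_or_pos i with rfl | hi1
      · rw [ancAt_zero hwf hv, hwf.2.1, zero_parent hflat hv hx, if_pos rfl]
      · rw [parent_ancAt hwf hv hi1 hid, mid_parent_x hwf hv hx hi1 hid]
    · rw [if_neg hwx]
      by_cases hwa : w = T.ancAt v i
      · subst hwa
        rw [if_pos rfl]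
        rcases Nat.eq_zero_or_pos i with rfl | hi1
        · rw [ancAt_zero hwf hv, zero_parent hflat hv hx, if_neg hrootx, if_pos rfl]
        · rw [mid_parent_ai hwf hv hx hi1 hid]
      · rw [if_neg hwa]
        by_cases hwa1 : w = T.ancAt v (i + 1)
        · subst hwa1
          rw [if_pos hmai1]
          have hex : ∃ z ∈ (T.insertAt (i + 1) x v).descendants (T.ancAt v (i + 1)),
              G.Adj (T.ancAt v i) z := by
            obtain ⟨z, hz, hadj⟩ := child_neighbor hflat (ancAt_mem hwf hv hid) hpt
            exact ⟨z, by rw [succ_desc_ai1 hflat hv hx hi]; exact hz, hadj⟩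
          rw [if_pos hex]
          rcases Nat.eq_zero_or_pos i with rfl | hi1
          · rw [zero_parent hflat hv hx, if_neg hai1x,
              if_neg (by rw [ancAt_zero hwf hv] at haii1; exact haii1), hpt]
          · rw [mid_parent hwf hv hx hi1 hid, if_neg hai1x, if_neg haii1, hpt]
        · have hmw : (T.insertAt (i + 1) x v).parent w = T.parent w := hmp w hwx hwa1
          have hnx : T.parent w ≠ some x := by
            intro h
            exact hx (parent_mem hwf h)
          rw [hmw, if_neg hnx]
          rcases Nat.eq_zero_or_pos i with rfl | hi1
          · rw [zero_parent hflat hv hx, if_neg hwx,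
              if_neg (by rw [ancAt_zero hwf hv] at hwa; exact hwa)]
          · rw [mid_parent hwf hv hx hi1 hid, if_neg hwx, if_neg hwa]

end Rot
end RTree
/-- the search trees `T(0,x,v), …, T(d_{T,v},x,v)` lie on a path in the
rotation graph `R(G')`: they are all search trees on `G'` and consecutive ones differ by
a single rotation. -/
theorem insertAt_path_in_rotationGraph {V : Type u} [Fintype V] (G' : SimpleGraph V)
    (hG' : G'.Connected) (x v : V) (hxv : x ≠ v)
    (hN : ∀ z : V, (z = x ∨ G'.Adj x z) → (z = v ∨ G'.Adj v z))
    (T : RTree V) (hT : IsSearchTreeOn G' {x}ᶜ T) :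
    (∀ i ≤ T.depthOf v, IsSearchTree G' (T.insertAt i x v))
    ∧ (∀ i < T.depthOf v, rotAdj G' (T.insertAt i x v) (T.insertAt (i + 1) x v)) := by
  obtain ⟨hsupp, hrec⟩ := hT
  have hflat := RTree.flat_of_rec hrec
  have hwf := hflat.1
  have hx : x ∉ T.supp := by rw [hsupp]; simp
  have hv : v ∈ T.supp := by
    rw [hsupp]; exact Set.mem_compl_singleton_iff.mpr (Ne.symm hxv)
  have hvx : G'.Adj v x := by
    rcases hN x (Or.inl rfl) with h | h
    · exact absurd h.symm (Ne.symm hxv)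
    · exact h
  have hN' : ∀ z ∈ T.supp, G'.Adj x z → T.isAncestor z v ∨ T.isAncestor v z := by
    intro z hz hadj
    rcases hN z (Or.inr hadj) with rfl | h
    · exact Or.inl Relation.ReflTransGen.refl
    · rcases RTree.adj_comparable hflat hv hz h with h1 | h1
      · exact Or.inr h1
      · exact Or.inl h1
  have hsuppuniv : insert x T.supp = Set.univ := by
    rw [hsupp]
    ext w
    simp only [Set.mem_insert_iff, Set.mem_compl_iff, Set.mem_singleton_iff, Set.mem_univ,
      iff_true]
    by_cases h : w = x
    · exact Or.inl h
    · exact Or.inr h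
  constructor
  · intro i hi
    rcases Nat.eq_zero_or_pos i with rfl | hi1
    · exact ⟨by rw [RTree.zero_supp hflat hv hx, hsuppuniv],
        RTree.rec_of_flat (RTree.zero_flat hflat hv hx hvx)⟩
    · exact ⟨by rw [RTree.mid_supp hwf hv hx hi1 hi, hsuppuniv],
        RTree.rec_of_flat (RTree.mid_flat hflat hv hx hvx hN' hi1 hi)⟩
  · intro i hi
    refine ⟨RTree.insert_ne_succ hflat hv hx hi, Or.inr ?_⟩
    exact ⟨T.ancAt v i, x, RTree.succ_parent_x hflat hv hx hi,
      RTree.insert_rotate_eq hflat hv hx hvx hi⟩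
end

section
/- Let G be a connected graph, K ⊆ V(G) a clique, x a new simplicial vertex attached to K forming G_K. Then the set R_0 = { T(0, x, v_{λ(T)}) : T a search tree on G } of all search trees on G_K rooted at x induces a subgraph of the rotation graph R(G_K) isomorphic to R(G), via the map T ↦ T(0, x, v_{λ(T)}). -/
open scoped Classical

universe u

variable {V : Type u}

/-! ### Auxiliary lemmas -/

namespace RTree

theorem rtree_ext {T S : RTree V} (h1 : T.supp = S.supp) (h2 : T.root = S.root)
    (h3 : T.parent = S.parent) : T = S := by
  cases T; cases S; simp_all

/-- Explicit form of insertion of `x` above the root. -/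
noncomputable def ins (T : RTree V) (x : V) : RTree V where
  supp := insert x T.supp
  root := x
  parent := fun w => if w = x then none else if w = T.root then some x else T.parent w

theorem insertAt_zero (T : RTree V) (x v : V) : T.insertAt 0 x v = T.ins x := by
  simp [insertAt, ins]

theorem parent_ne_some_of_not_mem {T : RTree V} (hwf : T.WF) {x : V} (hx : x ∉ T.supp)
    (w : V) : T.parent w ≠ some x := by
  intro h
  by_cases hw : w ∈ T.supp
  · by_cases hr : w = T.root
    · rw [hr, hwf.2.1] at h; exact Option.some_ne_none _ h.symm
    · obtain ⟨u, hu, hpu⟩ := hwf.2.2.2.1 w hw hr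
      rw [hpu] at h
      exact hx (Option.some.inj h ▸ hu)
  · rw [hwf.2.2.1 w hw] at h; exact Option.some_ne_none _ h.symm

theorem self_parent_fix {T : RTree V} {a b : V} (ha : T.parent a = some a)
    (h : Relation.ReflTransGen T.parentRel a b) : b = a := by
  induction h with
  | refl => rfl
  | tail h1 hstep ih =>
    subst ih
    exact Option.some.inj (hstep.symm.trans ha)

theorem parent_facts {T : RTree V} (hwf : T.WF) {u v : V} (h : T.parent v = some u) :
    v ∈ T.supp ∧ v ≠ T.root ∧ u ∈ T.supp ∧ u ≠ v := by
  have hv : v ∈ T.supp := by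
    by_contra hv
    rw [hwf.2.2.1 v hv] at h; exact Option.some_ne_none _ h.symm
  have hvr : v ≠ T.root := by
    intro hr; rw [hr, hwf.2.1] at h; exact Option.some_ne_none _ h.symm
  obtain ⟨u', hu', hpu'⟩ := hwf.2.2.2.1 v hv hvr
  have huu : u = u' := by rw [hpu'] at h; exact (Option.some.inj h).symm
  refine ⟨hv, hvr, huu ▸ hu', ?_⟩
  intro huv
  have := self_parent_fix (huv ▸ h) (hwf.2.2.2.2 v hv)
  exact hvr this.symm

theorem ins_parent_of {T : RTree V} (hwf : T.WF) {x : V} (hx : x ∉ T.supp) {c b : V}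
    (h : T.parent c = some b) : (T.ins x).parent c = some b := by
  obtain ⟨hc, hcr, -, -⟩ := parent_facts hwf h
  have hcx : c ≠ x := fun he => hx (he ▸ hc)
  simp [ins, hcx, hcr, h]

theorem ins_ancestor_down {T : RTree V} {x : V} {w z : V} (hw : w ≠ x)
    (h : (T.ins x).isAncestor w z) : T.isAncestor w z ∧ z ≠ x := by
  induction h using Relation.ReflTransGen.head_induction_on with
  | refl => exact ⟨Relation.ReflTransGen.refl, hw⟩
  | head hstep h' ih =>
    rename_i a c
    have hax : a ≠ x := by
      intro hax; rw [hax] at hstep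
      simp [parentRel, ins] at hstep
    have har : a ≠ T.root := by
      intro har
      have : c = x := by
        have := hstep
        simp [parentRel, ins, hax, har] at this
        exact this.2.symm
      exact ih.2 this
    have hTa : T.parentRel a c := by
      have := hstep
      simp [parentRel, ins, hax, har] at this
      exact this
    exact ⟨Relation.ReflTransGen.head hTa ih.1, hax⟩

theorem ins_ancestor_up {T : RTree V} (hwf : T.WF) {x : V} (hx : x ∉ T.supp) {w z : V}
    (h : T.isAncestor w z) : (T.ins x).isAncestor w z := by
  induction h with
  | refl => exact Relation.ReflTransGen.refl
  | tail h1 hstep ih =>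
    exact ih.tail (ins_parent_of hwf hx hstep)

theorem ins_descendants {T : RTree V} (hwf : T.WF) {x : V} (hx : x ∉ T.supp) {w : V} (hw : w ≠ x) :
    (T.ins x).descendants w = T.descendants w := by
  ext z
  constructor
  · rintro ⟨hz1, hz2⟩
    obtain ⟨ha, hzx⟩ := ins_ancestor_down hw hz2
    refine ⟨?_, ha⟩
    rcases hz1 with h | h
    · exact absurd h hzx
    · exact h
  · rintro ⟨hz1, hz2⟩
    exact ⟨Set.mem_insert_of_mem _ hz1, ins_ancestor_up hwf hx hz2⟩

theorem descendants_root_s9 {T : RTree V} (hwf : T.WF) : T.descendants T.root = T.supp := by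
  ext v
  exact ⟨fun h => h.1, fun h => ⟨h, hwf.2.2.2.2 v h⟩⟩

theorem ins_parent_eq_some_x {T : RTree V} (hwf : T.WF) {x : V} (hx : x ∉ T.supp) {w : V} :
    (T.ins x).parent w = some x ↔ w = T.root := by
  constructor
  · intro h
    by_cases hwx : w = x
    · simp [ins, hwx] at h
    · by_cases hwr : w = T.root
      · exact hwr
      · simp [ins, hwx, hwr] at h
        exact absurd h (parent_ne_some_of_not_mem hwf hx w)
  · intro h
    have hrx : T.root ≠ x := fun he => hx (he ▸ hwf.1)
    simp [ins, h, hrx]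

theorem ins_WF {T : RTree V} (hwf : T.WF) {x : V} (hx : x ∉ T.supp) : (T.ins x).WF := by
  have hrx : T.root ≠ x := fun he => hx (he ▸ hwf.1)
  refine ⟨Set.mem_insert _ _, by simp [ins], ?_, ?_, ?_⟩
  · intro v hv
    have hvx : v ≠ x := fun he => hv (he ▸ Set.mem_insert _ _)
    have hvs : v ∉ T.supp := fun he => hv (Set.mem_insert_of_mem _ he)
    have hvr : v ≠ T.root := fun he => hvs (he ▸ hwf.1)
    simp [ins, hvx, hvr, hwf.2.2.1 v hvs]
  · intro v hv hvx0
    have hvx : v ≠ x := hvx0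
    have hvs : v ∈ T.supp := by
      rcases hv with h | h
      · exact absurd h hvx
      · exact h
    by_cases hvr : v = T.root
    · exact ⟨x, Set.mem_insert _ _, by simp [ins, hvx, hvr, hrx]⟩
    · obtain ⟨u, hu, hpu⟩ := hwf.2.2.2.1 v hvs hvr
      exact ⟨u, Set.mem_insert_of_mem _ hu, by simp [ins, hvx, hvr, hpu]⟩
  · intro v hv
    rcases hv with h | h
    · rw [show (T.ins x).root = x from rfl]
      exact h ▸ Relation.ReflTransGen.refl
    · have h1 : (T.ins x).isAncestor T.root v := ins_ancestor_up hwf hx (hwf.2.2.2.2 v h)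
      exact h1.tail (by simp [parentRel, ins, hrx])

theorem subtreeAt_ins {T : RTree V} (hwf : T.WF) {x : V} (hx : x ∉ T.supp) :
    (T.ins x).subtreeAt T.root = T := by
  have hrx : T.root ≠ x := fun he => hx (he ▸ hwf.1)
  have hd : (T.ins x).descendants T.root = T.supp := by
    rw [ins_descendants hwf hx hrx, descendants_root_s9 hwf]
  refine rtree_ext ?_ rfl ?_
  · simp [subtreeAt, hd]
  · funext w
    by_cases hwr : w = T.root
    · simp [subtreeAt, hwr, hwf.2.1]
    · by_cases hws : w ∈ T.supp
      · have hwx : w ≠ x := fun he => hx (he ▸ hws)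
        simp only [subtreeAt]
        rw [if_neg hwr, hd, if_pos hws]
        simp [ins, hwx, hwr]
      · simp only [subtreeAt]
        rw [if_neg hwr, hd, if_neg hws]
        exact (hwf.2.2.1 w hws).symm

theorem ins_inj {x : V} {T S : RTree V} (hwfT : T.WF) (hxT : x ∉ T.supp)
    (hSsupp : T.supp = S.supp)
    (hSx : S.parent x = none)
    (hSr : S.root ≠ x) (hSroot : S.parent S.root = none)
    (hSnx : ∀ w, S.parent w ≠ some x)
    (h : T.ins x = S.ins x) : T = S := by
  have hTsupp : insert x T.supp = insert x S.supp := congrArg RTree.supp h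
  have hp : (T.ins x).parent = (S.ins x).parent := congrArg RTree.parent h
  have hSiff : ∀ w, (S.ins x).parent w = some x ↔ w = S.root := by
    intro w
    constructor
    · intro hw
      by_cases hwx : w = x
      · simp [ins, hwx] at hw
      · by_cases hwr : w = S.root
        · exact hwr
        · simp [ins, hwx, hwr] at hw
          exact absurd hw (hSnx w)
    · intro hw; simp [ins, hw, hSr]
  have hroot : T.root = S.root := by
    have h1 : (T.ins x).parent T.root = some x := (ins_parent_eq_some_x hwfT hxT).2 rfl
    rw [hp] at h1
    exact (hSiff T.root).1 h1
  have hTx : T.parent x = none := hwfT.2.2.1 x hxT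
  refine rtree_ext hSsupp hroot ?_
  funext w
  by_cases hwx : w = x
  · rw [hwx, hTx, hSx]
  · by_cases hwr : w = T.root
    · rw [hwr, hwfT.2.1, hroot, hSroot]
    · have hwr' : w ≠ S.root := hroot ▸ hwr
      have := congrFun hp w
      simpa [ins, hwx, hwr, hwr'] using this

theorem rotate_ins (G' : SimpleGraph V) {T : RTree V} {x u v : V}
    (hwf : T.WF) (hx : x ∉ T.supp) (h : T.parent v = some u) :
    rotate G' (T.ins x) u v = (rotate G' T u v).ins x := by
  obtain ⟨hv, hvr, hu, huv⟩ := parent_facts hwf h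
  have hvx : v ≠ x := fun he => hx (he ▸ hv)
  have hux : u ≠ x := fun he => hx (he ▸ hu)
  have hrx : T.root ≠ x := fun he => hx (he ▸ hwf.1)
  have hxu : x ≠ u := Ne.symm hux
  refine rtree_ext rfl ?_ ?_
  · simp [rotate, ins, hxu]
  · funext w
    by_cases hwx : w = x
    · subst hwx
      simp [rotate, ins, Ne.symm hvx, hxu]
    · by_cases hwv : w = v
      · subst hwv
        by_cases hru : T.root = u
        · simp [rotate, ins, hvx, hux, hru, huv]
        · have hur : u ≠ T.root := fun e => hru e.symm
          simp [rotate, ins, hvx, hux, hru, hvr, huv, hur]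
      · by_cases hwu : w = u
        · subst hwu
          by_cases hru : T.root = w
          · simp [rotate, ins, hwx, hwv, hru, huv, Ne.symm huv]
          · have hur : w ≠ T.root := fun e => hru e.symm
            simp [rotate, ins, hwx, hwv, hru, huv, Ne.symm huv, hur]
        · by_cases hwr : w = T.root
          · subst hwr
            have hru : ¬ T.root = u := fun e => hwu (by rw [e])
            simp [rotate, ins, hwx, hwv, hwu, hvx, Ne.symm hvx, hru]
          · have hdesc := ins_descendants hwf hx hwx
            by_cases hru : T.root = u
            · simp only [rotate, hdesc]
              simp [ins, hwx, hwv, hwu, hwr, hru]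
            · simp only [rotate, hdesc]
              simp [ins, hwx, hwv, hwu, hwr, hru]

theorem rotate_props (G' : SimpleGraph V) {T : RTree V} {x u v : V}
    (hwf : T.WF) (hx : x ∉ T.supp) (h : T.parent v = some u) :
    (rotate G' T u v).parent x = none ∧
    (rotate G' T u v).root ≠ x ∧
    (rotate G' T u v).parent (rotate G' T u v).root = none ∧
    ∀ w, (rotate G' T u v).parent w ≠ some x := by
  obtain ⟨hv, hvr, hu, huv⟩ := parent_facts hwf h
  have hvx : v ≠ x := fun he => hx (he ▸ hv)
  have hux : u ≠ x := fun he => hx (he ▸ hu)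
  have hrx : T.root ≠ x := fun he => hx (he ▸ hwf.1)
  have hTx : T.parent x = none := hwf.2.2.1 x hx
  refine ⟨?_, ?_, ?_, ?_⟩
  · simp [rotate, Ne.symm hvx, Ne.symm hux, hTx]
  · by_cases hru : T.root = u <;> simp [rotate, hru, hvx, hrx]
  · by_cases hru : T.root = u
    · have h1 : T.parent u = none := by rw [← hru]; exact hwf.2.1
      simp [rotate, hru, h1]
    · have hur : T.root ≠ u := hru
      have hrv : T.root ≠ v := Ne.symm hvr
      simp [rotate, hru, hrv, hur, hwf.2.1]
  · intro w
    by_cases hwv : w = v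
    · simp [rotate, hwv, parent_ne_some_of_not_mem hwf hx u]
    · by_cases hwu : w = u
      · simp [rotate, hwv, hwu, huv, hvx]
      · by_cases hpw : T.parent w = some v
        · by_cases hz : ∃ z ∈ T.descendants w, G'.Adj u z <;>
            simp [rotate, hwv, hwu, hpw, hz, hux, hvx]
        · simp [rotate, hwv, hwu, hpw, parent_ne_some_of_not_mem hwf hx w]

end RTree

theorem reachWithin_mono {G : SimpleGraph V} {s t : Set V} (hst : s ⊆ t) {a b : V}
    (h : reachWithin G s a b) : reachWithin G t a b :=
  Relation.ReflTransGen.mono (r := fun a b => a ∈ s ∧ b ∈ s ∧ G.Adj a b)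
    (p := fun a b => a ∈ t ∧ b ∈ t ∧ G.Adj a b)
    (fun _ _ hab => ⟨hst hab.1, hst hab.2.1, hab.2.2⟩) _ _ h

theorem ins_isSearchTree (G' : SimpleGraph V) (x : V) (K : Set V)
    (hK : K.Nonempty) (hNx : G'.neighborSet x = K)
    (hconn : ∀ a b : V, a ≠ x → b ≠ x → reachWithin G' {x}ᶜ a b)
    {T : RTree V} (hT : IsSearchTreeOn G' {x}ᶜ T) :
    IsSearchTreeOn G' Set.univ (T.ins x) := by
  obtain ⟨hsupp, hrecT⟩ := hT
  have hrecT' := hrecT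
  obtain ⟨_, hwf, hTconn, hTcomp, hTrec⟩ := hrecT
  have hx : x ∉ T.supp := by rw [hsupp]; simp
  have hwf' := RTree.ins_WF hwf hx
  have hrx : T.root ≠ x := fun he => hx (he ▸ hwf.1)
  have hFsupp : (T.ins x).supp = Set.univ := by
    show insert x T.supp = Set.univ
    rw [hsupp]
    ext v; by_cases hv : v = x <;> simp [hv]
  constructor
  · exact hFsupp
  · refine IsSearchTreeRec.intro _ hwf' ?_ ?_ ?_
    · rw [hFsupp]
      intro a _ b _
      have key : ∀ c : V, c ≠ x → reachWithin G' Set.univ x c := by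
        intro c hc
        obtain ⟨k, hk⟩ := hK
        have hadj : G'.Adj x k := by
          rw [← SimpleGraph.mem_neighborSet, hNx]; exact hk
        have hkx : k ≠ x := hadj.ne'
        exact Relation.ReflTransGen.head ⟨Set.mem_univ _, Set.mem_univ _, hadj⟩
          (reachWithin_mono (Set.subset_univ _) (hconn k c hkx hc))
      have hsymm : Symmetric (fun a b : V => a ∈ Set.univ ∧ b ∈ Set.univ ∧ G'.Adj a b) :=
        fun a b hab => ⟨hab.2.1, hab.1, hab.2.2.symm⟩
      by_cases ha : a = x
      · by_cases hb : b = x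
        · rw [ha, hb]; exact Relation.ReflTransGen.refl
        · rw [ha]; exact key b hb
      · by_cases hb : b = x
        · rw [hb]
          exact (@Relation.ReflTransGen.stdSymm _ _ ⟨fun a b h => hsymm h⟩).symm _ _ (key a ha)
        · exact reachWithin_mono (Set.subset_univ _) (hconn a b ha hb)
    · intro c hc w
      have hcr : c = T.root := (RTree.ins_parent_eq_some_x hwf hx).1 hc
      subst hcr
      have hd : (T.ins x).descendants T.root = T.supp := by
        rw [RTree.ins_descendants hwf hx hrx, RTree.descendants_root_s9 hwf]
      rw [hd]
      have hset : (T.ins x).supp \ {(T.ins x).root} = {x}ᶜ := by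
        rw [hFsupp]
        show Set.univ \ {x} = {x}ᶜ
        ext v; simp
      rw [hset]
      constructor
      · intro hw
        have hwx : w ≠ x := fun he => hx (he ▸ hw)
        refine ⟨by rw [hFsupp]; exact Set.mem_univ _, hwx, hconn T.root w hrx hwx⟩
      · rintro ⟨-, hwx, -⟩
        rw [hsupp]
        exact hwx
    · intro c hc
      have hcr : c = T.root := (RTree.ins_parent_eq_some_x hwf hx).1 hc
      subst hcr
      rw [RTree.subtreeAt_ins hwf hx]
      exact hrecT'

/-- the set of search trees on `G_K` rooted at `x` induces a subgraph of
`R(G_K)` isomorphic to `R(G)`, via `T ↦ T(0,x,v_{λ(T)})`. -/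
theorem rooted_at_x_copy_of_rotationGraph {V : Type u} [Fintype V] (G' : SimpleGraph V)
    (x : V) (K : Set V) (hK : K.Nonempty) (hNx : G'.neighborSet x = K)
    (hclique : ∀ a ∈ K, ∀ b ∈ K, a ≠ b → G'.Adj a b)
    (hconn : ∀ a b : V, a ≠ x → b ≠ x → reachWithin G' {x}ᶜ a b) :
    ∃ f : {T : RTree V // IsSearchTreeOn G' {x}ᶜ T} →
        {T : RTree V // IsSearchTreeOn G' Set.univ T},
      (∀ T, (f T).1 = T.1.insertAt 0 x (deepestIn T.1 K)) ∧
      Function.Injective f ∧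
      (∀ T T', (rotationGraphOn G' {x}ᶜ).Adj T T' ↔
        (rotationGraphOn G' Set.univ).Adj (f T) (f T')) := by
  classical
  have hget : ∀ {T : RTree V}, IsSearchTreeOn G' {x}ᶜ T → T.WF ∧ x ∉ T.supp := by
    intro T hT
    obtain ⟨hs, hr⟩ := hT
    obtain ⟨_, hwf, -, -, -⟩ := hr
    exact ⟨hwf, by rw [hs]; simp⟩
  have hinj : ∀ {A B : RTree V}, A.WF → x ∉ A.supp → B.WF → x ∉ B.supp →
      A.supp = B.supp → A.ins x = B.ins x → A = B := by
    intro A B hwfA hxA hwfB hxB hAB h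
    exact RTree.ins_inj hwfA hxA hAB (hwfB.2.2.1 x hxB)
      (fun he => hxB (he ▸ hwfB.1)) hwfB.2.1
      (RTree.parent_ne_some_of_not_mem hwfB hxB) h
  have hrotiff : ∀ (A B : RTree V), A.WF → x ∉ A.supp → B.WF → x ∉ B.supp →
      A.supp = B.supp →
      (IsRotation G' A B ↔ IsRotation G' (A.ins x) (B.ins x)) := by
    intro A B hwfA hxA hwfB hxB hAB
    constructor
    · rintro ⟨u, v, hp, heq⟩
      refine ⟨u, v, RTree.ins_parent_of hwfA hxA hp, ?_⟩
      rw [heq, ← RTree.rotate_ins G' hwfA hxA hp]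
    · rintro ⟨u, v, hp, heq⟩
      have hvx : v ≠ x := by
        intro he; rw [he] at hp; simp [RTree.ins] at hp
      have hux : u ≠ x := by
        intro he
        rw [he] at hp
        have hvr : v = A.root := (RTree.ins_parent_eq_some_x hwfA hxA).1 hp
        have hroot := congrArg RTree.root heq
        simp [RTree.ins, rotate, he] at hroot
        exact hxA (by rw [hroot.trans hvr]; exact hwfA.1)
      have hvr : v ≠ A.root := by
        intro he
        have h2 := (RTree.ins_parent_eq_some_x hwfA hxA).2 he
        exact hux (Option.some.inj (hp.symm.trans h2))
      have hpA : A.parent v = some u := by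
        have h3 := hp
        simp [RTree.ins, hvx, hvr] at h3
        exact h3
      refine ⟨u, v, hpA, ?_⟩
      have h2 : B.ins x = (rotate G' A u v).ins x := by
        rw [heq, RTree.rotate_ins G' hwfA hxA hpA]
      obtain ⟨p1, p2, p3, p4⟩ := RTree.rotate_props G' hwfA hxA hpA
      have hBS : B.supp = (rotate G' A u v).supp := hAB.symm
      exact RTree.ins_inj hwfB hxB hBS p1 p2 p3 p4 h2
  refine ⟨fun T => ⟨(T.1).ins x, ins_isSearchTree G' x K hK hNx hconn T.2⟩, ?_, ?_, ?_⟩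
  · intro T
    exact (RTree.insertAt_zero T.1 x (deepestIn T.1 K)).symm
  · intro T T' h
    obtain ⟨hwfT, hxT⟩ := hget T.2
    obtain ⟨hwfT', hxT'⟩ := hget T'.2
    apply Subtype.ext
    exact hinj hwfT hxT hwfT' hxT' (by rw [T.2.1, T'.2.1]) (congrArg Subtype.val h)
  · intro T T'
    obtain ⟨hwfT, hxT⟩ := hget T.2
    obtain ⟨hwfT', hxT'⟩ := hget T'.2
    have hsuppTT : T.1.supp = T'.1.supp := by rw [T.2.1, T'.2.1]
    show rotAdj G' T.1 T'.1 ↔ rotAdj G' ((T.1).ins x) ((T'.1).ins x)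
    constructor
    · rintro ⟨hne, hor⟩
      refine ⟨fun he => hne (hinj hwfT hxT hwfT' hxT' hsuppTT he), ?_⟩
      rcases hor with h1 | h1
      · exact Or.inl ((hrotiff T.1 T'.1 hwfT hxT hwfT' hxT' hsuppTT).1 h1)
      · exact Or.inr ((hrotiff T'.1 T.1 hwfT' hxT' hwfT hxT hsuppTT.symm).1 h1)
    · rintro ⟨hne, hor⟩
      refine ⟨fun he => hne (congrArg (fun S => S.ins x) he), ?_⟩
      rcases hor with h1 | h1
      · exact Or.inl ((hrotiff T.1 T'.1 hwfT hxT hwfT' hxT' hsuppTT).2 h1)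
      · exact Or.inr ((hrotiff T'.1 T.1 hwfT' hxT' hwfT hxT hsuppTT.symm).2 h1)
end
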